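/- arXiv:1102.1021 — 8 statements merged into one kernel-verified Lean document; each statement's English description precedes it below -/
import Mathlib

section
/- For every finite simple graph G, χ(G) ≤ Δ₂(G) + 1, where Δ₂(G) is the maximum over all edges xy of min{d(x), d(y)} (and Δ₂(G) = 0 if G has no edges). -/
open SimpleGraph Classical

/-- Chromatic number as a natural number. -/
noncomputable def chromNum {V : Type*} [Fintype V] (G : SimpleGraph V) : ℕ :=
  sInf {n | G.Colorable n}

/-- Degree of a vertex. -/
noncomputable def deg {V : Type*} [Fintype V] (G : SimpleGraph V) (v : V) : ℕ :=
  (G.neighborSet v).ncard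

/-- Maximum degree. -/
noncomputable def maxDeg {V : Type*} [Fintype V] (G : SimpleGraph V) : ℕ :=
  sSup {d | ∃ v, d = deg G v}

/-- Δ₂ : max over edges of the min of the endpoint degrees. -/
noncomputable def delta2 {V : Type*} [Fintype V] (G : SimpleGraph V) : ℕ :=
  sSup {d | ∃ u v, G.Adj u v ∧ d = min (deg G u) (deg G v)}

/-- Ore degree. -/
noncomputable def theta {V : Type*} [Fintype V] (G : SimpleGraph V) : ℕ :=
  sSup {d | ∃ u v, G.Adj u v ∧ d = deg G u + deg G v}

/-- Vertex-critical graph. -/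
noncomputable def critical {V : Type*} [Fintype V] (G : SimpleGraph V) : Prop :=
  ∀ v : V, chromNum (G.induce {u | u ≠ v}) < chromNum G

noncomputable def deltaEps {V : Type*} [Fintype V] (ε : ℝ) (G : SimpleGraph V) : ℕ :=
  ⌊sSup {x : ℝ | ∃ u v, G.Adj u v ∧
      x = (1 - ε) * (min (deg G u) (deg G v) : ℕ) + ε * (max (deg G u) (deg G v) : ℕ)}⌋₊

def FnRel (n : ℕ) : Fin n ⊕ Fin (n - 1) → Fin n ⊕ Fin (n - 1) → Prop
  | Sum.inl i, Sum.inl j => ¬((i : ℕ) = 0 ∧ (j : ℕ) = 1) ∧ ¬((i : ℕ) = 1 ∧ (j : ℕ) = 0)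
  | Sum.inr _, Sum.inr _ => True
  | Sum.inl i, Sum.inr a => ((i : ℕ) = 0 ∧ (a : ℕ) < (n - 1) / 2) ∨ ((i : ℕ) = 1 ∧ (n - 1) / 2 ≤ (a : ℕ))
  | Sum.inr _, Sum.inl _ => False

def Fn (n : ℕ) : SimpleGraph (Fin n ⊕ Fin (n - 1)) := SimpleGraph.fromRel (FnRel n)

lemma deg_le_card {V : Type*} [Fintype V] (G : SimpleGraph V) (v : V) :
    deg G v ≤ Fintype.card V := by
  have := Set.ncard_le_ncard (Set.subset_univ (G.neighborSet v)) Set.finite_univ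
  simpa [deg, Set.ncard_univ] using this

lemma delta2_bdd {V : Type*} [Fintype V] (G : SimpleGraph V) :
    BddAbove {d | ∃ u v, G.Adj u v ∧ d = min (deg G u) (deg G v)} := by
  refine ⟨Fintype.card V, fun d hd => ?_⟩
  obtain ⟨u, v, _, rfl⟩ := hd
  exact le_trans (min_le_left _ _) (deg_le_card G u)

lemma min_le_delta2 {V : Type*} [Fintype V] (G : SimpleGraph V) {u v : V} (h : G.Adj u v) :
    min (deg G u) (deg G v) ≤ delta2 G :=
  le_csSup (delta2_bdd G) ⟨u, v, h, rfl⟩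

lemma deg_induce_le {V : Type*} [Fintype V] (G : SimpleGraph V) (s : Set V) (x : s) :
    deg (G.induce s) x ≤ deg G x.val := by
  have h1 : (Subtype.val '' (G.induce s).neighborSet x) ⊆ G.neighborSet x.val := by
    rintro y ⟨z, hz, rfl⟩
    exact hz
  have := Set.ncard_le_ncard h1 (Set.toFinite _)
  rwa [Set.ncard_image_of_injective _ Subtype.val_injective] at this

lemma delta2_induce_le {V : Type*} [Fintype V] (G : SimpleGraph V) (s : Set V) :
    delta2 (G.induce s) ≤ delta2 G := by
  refine csSup_le' ?_
  rintro d ⟨u, v, huv, rfl⟩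
  have huv' : G.Adj u.val v.val := huv
  calc min (deg (G.induce s) u) (deg (G.induce s) v)
      ≤ min (deg G u.val) (deg G v.val) :=
        min_le_min (deg_induce_le G s u) (deg_induce_le G s v)
    _ ≤ delta2 G := min_le_delta2 G huv'

lemma key : ∀ (n k : ℕ) (V : Type u) [Fintype V] (G : SimpleGraph V),
    Fintype.card V ≤ n → delta2 G ≤ k → G.Colorable (k + 1) := by
  intro n
  induction n with
  | zero =>
    intro k V _ G hcard _
    have : IsEmpty V := Fintype.card_eq_zero_iff.mp (Nat.le_zero.mp hcard)
    exact Colorable.of_isEmpty (G := G) _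
  | succ n ih =>
    intro k V _ G hcard hd
    by_cases hV : Nonempty V
    · -- pick a vertex of minimum degree
      obtain ⟨v, -, hv⟩ := Finset.exists_min_image Finset.univ (deg G)
        (Finset.univ_nonempty)
      have hvdeg : deg G v ≤ k := by
        by_cases hadj : ∃ u, G.Adj v u
        · obtain ⟨u, hu⟩ := hadj
          have h1 : min (deg G v) (deg G u) = deg G v :=
            min_eq_left (hv u (Finset.mem_univ u))
          have := min_le_delta2 G hu
          rw [h1] at this
          exact le_trans this hd
        · have : G.neighborSet v = ∅ := by
            ext u; simp only [mem_neighborSet, Set.mem_empty_iff_false, iff_false]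
            exact fun h => hadj ⟨u, h⟩
          simp [deg, this]
      set s : Set V := {u | u ≠ v} with hs
      have hcard' : Fintype.card s ≤ n := by
        have h1 : Fintype.card s < Fintype.card V := by
          apply Fintype.card_lt_of_injective_of_notMem (Subtype.val) Subtype.val_injective
            (b := v)
          simp [hs]
        omega
      have hC : (G.induce s).Colorable (k + 1) :=
        ih k s (G.induce s) hcard' (le_trans (delta2_induce_le G s) hd)
      obtain ⟨C⟩ := hC
      -- find a free color at v
      have hfree : ∃ c : Fin (k + 1), ∀ u : s, G.Adj v u.val → C u ≠ c := by
        by_contra hcon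
        push_neg at hcon
        -- every color is used by a neighbor
        have hsurj : ∀ c : Fin (k + 1), c ∈ C '' {u : s | G.Adj v u.val} := by
          intro c
          obtain ⟨u, hu, hc⟩ := hcon c
          exact ⟨u, hu, hc⟩
        have h1 : (Set.univ : Set (Fin (k + 1))) ⊆ C '' {u : s | G.Adj v u.val} :=
          fun c _ => hsurj c
        have h2 := Set.ncard_le_ncard h1 (Set.toFinite _)
        rw [Set.ncard_univ] at h2
        have h3 : (C '' {u : s | G.Adj v u.val}).ncard ≤ ({u : s | G.Adj v u.val}).ncard :=
          Set.ncard_image_le (Set.toFinite _)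
        have h4 : ({u : s | G.Adj v u.val}).ncard ≤ deg G v := by
          have h5 : (Subtype.val '' {u : s | G.Adj v u.val}) ⊆ G.neighborSet v := by
            rintro y ⟨z, hz, rfl⟩; exact hz
          have := Set.ncard_le_ncard h5 (Set.toFinite _)
          rwa [Set.ncard_image_of_injective _ Subtype.val_injective] at this
        simp [Nat.card_eq_fintype_card] at h2
        omega
      obtain ⟨c, hc⟩ := hfree
      refine ⟨Coloring.mk (fun u => if h : u = v then c else C ⟨u, h⟩) ?_⟩
      intro u w huw
      by_cases hu : u = v <;> by_cases hw : w = v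
      · exact absurd (hu ▸ hw ▸ huw) (G.irrefl)
      · subst hu
        simp only [dif_pos rfl, dif_neg hw]
        exact fun h => hc ⟨w, hw⟩ huw h.symm
      · subst hw
        simp only [dif_pos rfl, dif_neg hu]
        exact fun h => hc ⟨u, hu⟩ (G.adj_symm huw) h
      · simp only [dif_neg hu, dif_neg hw]
        exact C.valid (by exact huw : (G.induce s).Adj ⟨u, hu⟩ ⟨w, hw⟩)
    · have : IsEmpty V := not_nonempty_iff.mp hV
      exact Colorable.of_isEmpty (G := G) _

theorem stmt1 {V : Type*} [Fintype V] (G : SimpleGraph V) :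
    chromNum G ≤ delta2 G + 1 :=
  Nat.sInf_le (key (Fintype.card V) (delta2 G) V G le_rfl le_rfl)
end

section
/- For a finite simple graph G with at least one edge, χ(G) > Δ₂(G) if and only if the induced subgraph of G on the vertices of degree at least χ(G) is edgeless. -/
open SimpleGraph Classical

theorem stmt4 {V : Type*} [Fintype V] (G : SimpleGraph V) (h : ∃ u v, G.Adj u v) :
    delta2 G < chromNum G ↔
      ∀ u v, chromNum G ≤ deg G u → chromNum G ≤ deg G v → ¬ G.Adj u v := by
  have hbdd : BddAbove {d | ∃ u v, G.Adj u v ∧ d = min (deg G u) (deg G v)} := by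
    refine ⟨Fintype.card V, ?_⟩
    rintro d ⟨u, v, hadj, rfl⟩
    refine le_trans (min_le_left _ _) ?_
    have : deg G u ≤ (Set.univ : Set V).ncard :=
      Set.ncard_le_ncard (Set.subset_univ _) (Set.finite_univ)
    simpa [Set.ncard_univ] using this
  constructor
  · intro hlt u v hu hv hadj
    have hmem : min (deg G u) (deg G v) ∈
        {d | ∃ u v, G.Adj u v ∧ d = min (deg G u) (deg G v)} := ⟨u, v, hadj, rfl⟩
    have hle : min (deg G u) (deg G v) ≤ delta2 G := le_csSup hbdd hmem
    have : chromNum G ≤ delta2 G := le_trans (le_min hu hv) hle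
    omega
  · intro hall
    obtain ⟨u, v, hadj⟩ := h
    have hne : {d | ∃ u v, G.Adj u v ∧ d = min (deg G u) (deg G v)}.Nonempty :=
      ⟨min (deg G u) (deg G v), u, v, hadj, rfl⟩
    have hmem := Nat.sSup_mem hne hbdd
    obtain ⟨a, b, hab, heq⟩ := hmem
    have : ¬ (chromNum G ≤ deg G a ∧ chromNum G ≤ deg G b) := by
      rintro ⟨h1, h2⟩; exact hall a b h1 h2 hab
    unfold delta2
    omega
end

section
/- For every 0 < ε ≤ 1 and every t that works as a threshold in the statement 'every graph G with Δ_ε(G) ≥ t satisfies χ(G) ≤ max{ω(G), Δ_ε(G)}', we must have t ≥ 1 + 2/ε. Concretely: for each 0 < ε ≤ 1 there exists a finite simple graph F with Δ_ε(F) ≥ 1 + 2/ε − 1 (i.e., Δ_ε(F) = n−1 with n ≥ 1 + 2/ε) and χ(F) > max{ω(F), Δ_ε(F)}. -/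
open SimpleGraph Classical

section Aux
open Sum

lemma ncard_ne (m : ℕ) (a : Fin m) : ({b | b ≠ a} : Set (Fin m)).ncard = m - 1 := by
  rw [Set.ncard_eq_toFinset_card', Set.toFinset_setOf, Finset.filter_ne',
    Finset.card_erase_of_mem (Finset.mem_univ a)]
  simp

lemma ncard_lt (m c : ℕ) (hc : c < m) : ({b : Fin m | (b:ℕ) < c}).ncard = c := by
  have : ({b : Fin m | (b:ℕ) < c}) = Set.Iio (⟨c, hc⟩ : Fin m) := by
    ext b; simp [Fin.lt_def]
  rw [this, Set.ncard_eq_toFinset_card', Set.toFinset_Iio, Fin.card_Iio]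

lemma ncard_ge (m c : ℕ) (hc : c < m) : ({b : Fin m | c ≤ (b:ℕ)}).ncard = m - c := by
  have : ({b : Fin m | c ≤ (b:ℕ)}) = Set.Ici (⟨c, hc⟩ : Fin m) := by
    ext b; simp [Fin.le_def]
  rw [this, Set.ncard_eq_toFinset_card', Set.toFinset_Ici, Fin.card_Ici]

variable {k : ℕ}

def Gk (k : ℕ) : SimpleGraph (Fin (2*k+1) ⊕ Fin (2*k)) := Fn (2*k+1)

lemma half : (2*k+1-1)/2 = k := by omega

lemma adj_inl_inl (i j : Fin (2*k+1)) :
    (Gk k).Adj (inl i) (inl j) ↔ i ≠ j ∧ ¬((i:ℕ)=0 ∧ (j:ℕ)=1) ∧ ¬((i:ℕ)=1 ∧ (j:ℕ)=0) := by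
  simp [Gk, Fn, FnRel, SimpleGraph.fromRel_adj]; tauto

lemma adj_inr_inr (a b : Fin (2*k)) :
    (Gk k).Adj (inr a) (inr b) ↔ a ≠ b := by
  simp [Gk, Fn, FnRel, SimpleGraph.fromRel_adj]

lemma adj_inl_inr (i : Fin (2*k+1)) (a : Fin (2*k)) :
    (Gk k).Adj (inl i) (inr a) ↔ (((i:ℕ)=0 ∧ (a:ℕ) < k) ∨ ((i:ℕ)=1 ∧ k ≤ (a:ℕ))) := by
  simp [Gk, Fn, FnRel, SimpleGraph.fromRel_adj, half]

lemma adj_inr_inl (i : Fin (2*k+1)) (a : Fin (2*k)) :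
    (Gk k).Adj (inr a) (inl i) ↔ (((i:ℕ)=0 ∧ (a:ℕ) < k) ∨ ((i:ℕ)=1 ∧ k ≤ (a:ℕ))) := by
  rw [SimpleGraph.adj_comm]; exact adj_inl_inr i a

lemma deg_inr (hk : 1 ≤ k) (a : Fin (2*k)) : deg (Gk k) (inr a) = 2*k := by
  classical
  have hns : (Gk k).neighborSet (inr a) =
      (inl '' {i : Fin (2*k+1) | ((i:ℕ)=0 ∧ (a:ℕ) < k) ∨ ((i:ℕ)=1 ∧ k ≤ (a:ℕ))}) ∪
      (inr '' {b | b ≠ a}) := by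
    ext u
    cases u with
    | inl i => simp [SimpleGraph.mem_neighborSet, adj_inr_inl]
    | inr b => simp [SimpleGraph.mem_neighborSet, adj_inr_inr, eq_comm, ne_comm]
  have hsingle : ({i : Fin (2*k+1) | ((i:ℕ)=0 ∧ (a:ℕ) < k) ∨ ((i:ℕ)=1 ∧ k ≤ (a:ℕ))}).ncard = 1 := by
    by_cases hak : (a:ℕ) < k
    · have : ({i : Fin (2*k+1) | ((i:ℕ)=0 ∧ (a:ℕ) < k) ∨ ((i:ℕ)=1 ∧ k ≤ (a:ℕ))}) =
          {(⟨0, by omega⟩ : Fin (2*k+1))} := by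
        ext i; simp only [Set.mem_setOf_eq, Set.mem_singleton_iff, Fin.ext_iff]
        omega
      rw [this]; exact Set.ncard_singleton _
    · have : ({i : Fin (2*k+1) | ((i:ℕ)=0 ∧ (a:ℕ) < k) ∨ ((i:ℕ)=1 ∧ k ≤ (a:ℕ))}) =
          {(⟨1, by omega⟩ : Fin (2*k+1))} := by
        ext i; simp only [Set.mem_setOf_eq, Set.mem_singleton_iff, Fin.ext_iff]
        omega
      rw [this]; exact Set.ncard_singleton _
  rw [deg, hns, Set.ncard_union_eq (by simp [Set.disjoint_left]) (Set.toFinite _) (Set.toFinite _),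
    Set.ncard_image_of_injective _ Sum.inl_injective, Set.ncard_image_of_injective _ Sum.inr_injective,
    hsingle, ncard_ne]
  omega



lemma deg_inl_big (i : Fin (2*k+1)) (h0 : (i:ℕ) ≠ 0) (h1 : (i:ℕ) ≠ 1) :
    deg (Gk k) (inl i) ≤ 2*k := by
  have hsub : (Gk k).neighborSet (inl i) ⊆ inl '' {j | j ≠ i} := by
    intro u hu
    cases u with
    | inl j =>
      rw [SimpleGraph.mem_neighborSet, adj_inl_inl] at hu
      exact ⟨j, fun hji => hu.1 hji.symm, rfl⟩
    | inr a =>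
      rw [SimpleGraph.mem_neighborSet, adj_inl_inr] at hu
      omega
  calc deg (Gk k) (inl i) ≤ (inl '' {j | j ≠ i} : Set _).ncard :=
        Set.ncard_le_ncard hsub (Set.toFinite _)
    _ = 2*k := by
        rw [Set.ncard_image_of_injective _ Sum.inl_injective, ncard_ne]; omega

lemma deg_inl_small (hk : 1 ≤ k) (i : Fin (2*k+1)) (h : (i:ℕ) = 0 ∨ (i:ℕ) = 1) :
    deg (Gk k) (inl i) ≤ 3*k - 1 := by
  rcases h with h | h
  · have hsub : (Gk k).neighborSet (inl i) ⊆
        (inl '' {j : Fin (2*k+1) | 2 ≤ (j:ℕ)}) ∪ (inr '' {a : Fin (2*k) | (a:ℕ) < k}) := by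
      intro u hu
      cases u with
      | inl j =>
        rw [SimpleGraph.mem_neighborSet, adj_inl_inl] at hu
        refine Or.inl ⟨j, ?_, rfl⟩
        have : (j:ℕ) ≠ (i:ℕ) := fun hc => hu.1 (Fin.ext hc.symm)
        simp only [Set.mem_setOf_eq]; omega
      | inr a =>
        rw [SimpleGraph.mem_neighborSet, adj_inl_inr] at hu
        exact Or.inr ⟨a, by simp only [Set.mem_setOf_eq]; omega, rfl⟩
    calc deg (Gk k) (inl i) ≤ _ := Set.ncard_le_ncard hsub (Set.toFinite _)
      _ ≤ (inl '' {j : Fin (2*k+1) | 2 ≤ (j:ℕ)} : Set _).ncard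
          + (inr '' {a : Fin (2*k) | (a:ℕ) < k} : Set _).ncard := Set.ncard_union_le _ _
      _ ≤ 3*k - 1 := by
          rw [Set.ncard_image_of_injective _ Sum.inl_injective,
            Set.ncard_image_of_injective _ Sum.inr_injective,
            ncard_ge _ _ (by omega), ncard_lt _ _ (by omega)]
          omega
  · have hsub : (Gk k).neighborSet (inl i) ⊆
        (inl '' {j : Fin (2*k+1) | 2 ≤ (j:ℕ)}) ∪ (inr '' {a : Fin (2*k) | k ≤ (a:ℕ)}) := by
      intro u hu
      cases u with
      | inl j =>
        rw [SimpleGraph.mem_neighborSet, adj_inl_inl] at hu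
        refine Or.inl ⟨j, ?_, rfl⟩
        have : (j:ℕ) ≠ (i:ℕ) := fun hc => hu.1 (Fin.ext hc.symm)
        simp only [Set.mem_setOf_eq]; omega
      | inr a =>
        rw [SimpleGraph.mem_neighborSet, adj_inl_inr] at hu
        exact Or.inr ⟨a, by simp only [Set.mem_setOf_eq]; omega, rfl⟩
    calc deg (Gk k) (inl i) ≤ _ := Set.ncard_le_ncard hsub (Set.toFinite _)
      _ ≤ (inl '' {j : Fin (2*k+1) | 2 ≤ (j:ℕ)} : Set _).ncard
          + (inr '' {a : Fin (2*k) | k ≤ (a:ℕ)} : Set _).ncard := Set.ncard_union_le _ _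
      _ ≤ 3*k - 1 := by
          rw [Set.ncard_image_of_injective _ Sum.inl_injective,
            Set.ncard_image_of_injective _ Sum.inr_injective,
            ncard_ge _ _ (by omega), ncard_ge _ _ (by omega)]
          omega

lemma deg_le (hk : 1 ≤ k) (u : Fin (2*k+1) ⊕ Fin (2*k)) : deg (Gk k) u ≤ 3*k - 1 := by
  cases u with
  | inl i =>
    by_cases h0 : (i:ℕ) = 0 ∨ (i:ℕ) = 1
    · exact deg_inl_small hk i h0
    · push_neg at h0
      exact le_trans (deg_inl_big i h0.1 h0.2) (by omega)
  | inr a => rw [deg_inr hk]; omega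

lemma edge_min_le (hk : 1 ≤ k) {u v : Fin (2*k+1) ⊕ Fin (2*k)} (h : (Gk k).Adj u v) :
    min (deg (Gk k) u) (deg (Gk k) v) ≤ 2*k := by
  cases u with
  | inr a => rw [deg_inr hk]; omega
  | inl i =>
    cases v with
    | inr a => rw [deg_inr hk]; omega
    | inl j =>
      rw [adj_inl_inl] at h
      obtain ⟨hij, h01, h10⟩ := h
      have hij' : (i:ℕ) ≠ (j:ℕ) := fun hc => hij (Fin.ext hc)
      rcases Nat.lt_or_ge 1 (i:ℕ) with hi | hi
      · exact le_trans (min_le_left _ _) (deg_inl_big i (by omega) (by omega))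
      · exact le_trans (min_le_right _ _) (deg_inl_big j (by omega) (by omega))



lemma deltaEps_Gk {ε : ℝ} (hk : 1 ≤ k) (hε0 : 0 < ε) (hε1 : ε ≤ 1)
    (hlt : ε * ((k:ℝ) - 1) < 1) : deltaEps ε (Gk k) = 2*k := by
  set S : Set ℝ := {x : ℝ | ∃ u v, (Gk k).Adj u v ∧
      x = (1 - ε) * (min (deg (Gk k) u) (deg (Gk k) v) : ℕ) +
        ε * (max (deg (Gk k) u) (deg (Gk k) v) : ℕ)} with hS
  have hmem : (2*k : ℝ) ∈ S := by
    refine ⟨inr ⟨0, by omega⟩, inr ⟨1, by omega⟩, ?_, ?_⟩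
    · rw [adj_inr_inr]; simp [Fin.ext_iff]
    · rw [deg_inr hk, deg_inr hk]
      simp; ring
  have hub : ∀ x ∈ S, x ≤ 2*k + ε * ((k:ℝ) - 1) := by
    rintro x ⟨u, v, huv, rfl⟩
    have h1 : min (deg (Gk k) u) (deg (Gk k) v) ≤ 2*k := edge_min_le hk huv
    have h2 : max (deg (Gk k) u) (deg (Gk k) v) ≤ 3*k - 1 := max_le (deg_le hk u) (deg_le hk v)
    have h1' : ((min (deg (Gk k) u) (deg (Gk k) v) : ℕ) : ℝ) ≤ 2*(k:ℝ) := by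
      exact_mod_cast Nat.cast_le.mpr h1 |>.trans (by push_cast; norm_num)
    have h2' : ((max (deg (Gk k) u) (deg (Gk k) v) : ℕ) : ℝ) ≤ 3*(k:ℝ) - 1 := by
      have : ((max (deg (Gk k) u) (deg (Gk k) v) : ℕ) : ℝ) ≤ ((3*k - 1 : ℕ) : ℝ) :=
        Nat.cast_le.mpr h2
      refine this.trans ?_
      rw [Nat.cast_sub (by omega)]
      push_cast; norm_num
    nlinarith [h1', h2']
  have hbdd : BddAbove S := ⟨2*k + ε * ((k:ℝ) - 1), hub⟩
  have hsup_ge : (2*k : ℝ) ≤ sSup S := le_csSup hbdd hmem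
  have hsup_le : sSup S ≤ 2*k + ε * ((k:ℝ) - 1) := csSup_le ⟨_, hmem⟩ hub
  rw [deltaEps]
  rw [← hS]
  rw [Nat.floor_eq_iff (le_trans (by positivity) hsup_ge)]
  constructor
  · exact_mod_cast hsup_ge
  · push_cast
    calc sSup S ≤ 2*k + ε * ((k:ℝ) - 1) := hsup_le
      _ < 2*(k:ℝ) + 1 := by linarith



lemma clique_card_le (hk : 1 ≤ k) (s : Finset (Fin (2*k+1) ⊕ Fin (2*k)))
    (hs : (Gk k).IsClique s) : s.card ≤ 2*k := by
  rw [← Finset.card_toLeft_add_card_toRight]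
  rcases s.toRight.eq_empty_or_nonempty with hR | ⟨b, hb⟩
  · rw [hR, Finset.card_empty]
    by_contra hcon
    push_neg at hcon
    have hcard : s.toLeft.card = 2*k+1 := by
      have := Finset.card_le_univ s.toLeft
      simp only [Finset.card_univ, Fintype.card_fin] at this
      omega
    have huniv : s.toLeft = Finset.univ := Finset.eq_univ_of_card _ (by simp [hcard])
    have h0 : (inl (⟨0, by omega⟩ : Fin (2*k+1)) : Fin (2*k+1) ⊕ Fin (2*k)) ∈
        (↑s : Set (Fin (2*k+1) ⊕ Fin (2*k))) :=
      Finset.mem_coe.mpr (Finset.mem_toLeft.mp (huniv ▸ Finset.mem_univ _))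
    have h1 : (inl (⟨1, by omega⟩ : Fin (2*k+1)) : Fin (2*k+1) ⊕ Fin (2*k)) ∈
        (↑s : Set (Fin (2*k+1) ⊕ Fin (2*k))) :=
      Finset.mem_coe.mpr (Finset.mem_toLeft.mp (huniv ▸ Finset.mem_univ _))
    have hne : (inl (⟨0, by omega⟩ : Fin (2*k+1)) : Fin (2*k+1) ⊕ Fin (2*k)) ≠
        inl (⟨1, by omega⟩ : Fin (2*k+1)) := by simp [Fin.ext_iff]
    have hadj := hs h0 h1 hne
    rw [adj_inl_inl] at hadj
    simp at hadj
  · have hbs : (inr b : Fin (2*k+1) ⊕ Fin (2*k)) ∈ (s : Set _) := by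
      exact_mod_cast Finset.mem_toRight.mp hb
    rcases s.toLeft.eq_empty_or_nonempty with hL | ⟨i, hi⟩
    · rw [hL, Finset.card_empty]
      have := Finset.card_le_univ s.toRight
      simp only [Finset.card_univ, Fintype.card_fin] at this
      omega
    · have his : (inl i : Fin (2*k+1) ⊕ Fin (2*k)) ∈ (s : Set _) := by
        exact_mod_cast Finset.mem_toLeft.mp hi
      have hadj := hs his hbs (by simp)
      rw [adj_inl_inr] at hadj
      have hLsub : s.toLeft ⊆ {i} := by
        intro j hj
        have hjs : (inl j : Fin (2*k+1) ⊕ Fin (2*k)) ∈ (s : Set _) := by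
          exact_mod_cast Finset.mem_toLeft.mp hj
        have hadj' := hs hjs hbs (by simp)
        rw [adj_inl_inr] at hadj'
        have : (j:ℕ) = (i:ℕ) := by omega
        simp [Fin.ext_iff, this]
      have hL1 : s.toLeft.card ≤ 1 :=
        le_trans (Finset.card_le_card hLsub) (by simp)
      have hRk : s.toRight.card ≤ k := by
        rcases hadj with ⟨hi0, hbk⟩ | ⟨hi1, hbk⟩
        · have hRsub : s.toRight ⊆ Finset.Iio (⟨k, by omega⟩ : Fin (2*k)) := by
            intro b' hb'
            have hbs' : (inr b' : Fin (2*k+1) ⊕ Fin (2*k)) ∈ (s : Set _) := by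
              exact_mod_cast Finset.mem_toRight.mp hb'
            have hadj' := hs his hbs' (by simp)
            rw [adj_inl_inr] at hadj'
            rw [Finset.mem_Iio]
            exact Fin.lt_def.mpr (by simp; omega)
          exact le_trans (Finset.card_le_card hRsub) (by rw [Fin.card_Iio])
        · have hRsub : s.toRight ⊆ Finset.Ici (⟨k, by omega⟩ : Fin (2*k)) := by
            intro b' hb'
            have hbs' : (inr b' : Fin (2*k+1) ⊕ Fin (2*k)) ∈ (s : Set _) := by
              exact_mod_cast Finset.mem_toRight.mp hb'
            have hadj' := hs his hbs' (by simp)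
            rw [adj_inl_inr] at hadj'
            rw [Finset.mem_Ici]
            have hgoal : k ≤ (b':ℕ) := by omega
            rw [Fin.le_def]
            exact hgoal
          exact le_trans (Finset.card_le_card hRsub) (by rw [Fin.card_Ici]; show 2*k - k ≤ k; omega)
      omega

lemma cliqueNum_Gk_le (hk : 1 ≤ k) : (Gk k).cliqueNum ≤ 2*k := by
  apply csSup_le
  · exact ⟨0, ∅, SimpleGraph.isNClique_empty.mpr rfl⟩
  · rintro m ⟨s, hclique, hcard⟩
    rw [← hcard]
    exact clique_card_le hk s hclique



lemma colorable_Gk (hk : 1 ≤ k) : (Gk k).Colorable (2*k+1) := by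
  refine ⟨SimpleGraph.Coloring.mk (Sum.elim id Fin.succ) ?_⟩
  intro u v huv
  cases u with
  | inl i =>
    cases v with
    | inl j =>
      rw [adj_inl_inl] at huv
      simpa using huv.1
    | inr a =>
      rw [adj_inl_inr] at huv
      simp only [Sum.elim_inl, Sum.elim_inr, id_eq, ne_eq, Fin.ext_iff, Fin.val_succ]
      omega
  | inr a =>
    cases v with
    | inl i =>
      rw [adj_inr_inl] at huv
      simp only [Sum.elim_inl, Sum.elim_inr, id_eq, ne_eq, Fin.ext_iff, Fin.val_succ]
      omega
    | inr b =>
      rw [adj_inr_inr] at huv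
      simpa [Fin.ext_iff, Fin.val_succ] using fun h => huv (Fin.ext h)

lemma not_colorable_Gk (hk : 1 ≤ k) : ¬ (Gk k).Colorable (2*k) := by
  rintro ⟨C⟩
  set i0 : Fin (2*k+1) := ⟨0, by omega⟩ with hi0
  set i1 : Fin (2*k+1) := ⟨1, by omega⟩ with hi1
  have hinj : Function.Injective (fun a : Fin (2*k) => C (inr a)) := by
    intro a b hab
    by_contra hne
    exact C.valid ((adj_inr_inr a b).mpr hne) hab
  have hsurj : Function.Surjective (fun a : Fin (2*k) => C (inr a)) :=
    Finite.surjective_of_injective hinj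
  set T := (Finset.Ici (⟨2, by omega⟩ : Fin (2*k+1))).image (fun i => C (inl i)) with hT
  have hinjOn : Set.InjOn (fun i => C (inl i)) ↑(Finset.Ici (⟨2, by omega⟩ : Fin (2*k+1))) := by
    intro x hx y hy hxy
    by_contra hne
    rw [Finset.mem_coe, Finset.mem_Ici, Fin.le_def] at hx hy
    have hx' : 2 ≤ (x:ℕ) := hx
    have hy' : 2 ≤ (y:ℕ) := hy
    exact C.valid ((adj_inl_inl x y).mpr ⟨hne, by omega, by omega⟩) hxy
  have hTcard : T.card = 2*k - 1 := by
    rw [hT, Finset.card_image_of_injOn hinjOn, Fin.card_Ici]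
    show 2*k+1-2 = 2*k-1
    omega
  have hmemT : ∀ i : Fin (2*k+1), (i:ℕ) ≤ 1 → C (inl i) ∉ T := by
    intro i hile hmem
    rw [hT, Finset.mem_image] at hmem
    obtain ⟨j, hj, hje⟩ := hmem
    rw [Finset.mem_Ici, Fin.le_def] at hj
    have hj' : 2 ≤ (j:ℕ) := hj
    exact C.valid ((adj_inl_inl i j).mpr
      ⟨by simp only [ne_eq, Fin.ext_iff]; omega, by omega, by omega⟩) hje.symm
  have hcompl : Tᶜ.card = 1 := by
    rw [Finset.card_compl, hTcard]
    simp only [Fintype.card_fin]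
    omega
  have heq : C (inl i0) = C (inl i1) := by
    have h0 : C (inl i0) ∈ Tᶜ := Finset.mem_compl.mpr (hmemT i0 (by simp [hi0]))
    have h1 : C (inl i1) ∈ Tᶜ := Finset.mem_compl.mpr (hmemT i1 (by simp [hi1]))
    exact Finset.card_le_one.mp (by omega) _ h0 _ h1
  obtain ⟨a, ha⟩ := hsurj (C (inl i0))
  simp only at ha
  by_cases hak : (a:ℕ) < k
  · exact C.valid ((adj_inl_inr i0 a).mpr (Or.inl ⟨by simp [hi0], hak⟩)) ha.symm
  · refine C.valid ((adj_inl_inr i1 a).mpr (Or.inr ⟨by simp [hi1], by omega⟩)) ?_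
    rw [ha, heq]

lemma chromNum_Gk (hk : 1 ≤ k) : chromNum (Gk k) = 2*k+1 := by
  have hset : {n | (Gk k).Colorable n} = Set.Ici (2*k+1) := by
    ext m
    simp only [Set.mem_setOf_eq, Set.mem_Ici]
    constructor
    · intro hm
      by_contra hlt
      push_neg at hlt
      exact not_colorable_Gk hk (hm.mono (show m ≤ 2*k by omega))
    · intro hm
      exact (colorable_Gk hk).mono hm
  rw [chromNum, hset, csInf_Ici]



lemma deg_comap {α β : Type*} [Fintype α] [Fintype β] (σ : α ≃ β) (H : SimpleGraph β) (v : α) :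
    deg (H.comap σ) v = deg H (σ v) := by
  have hns : (H.comap σ).neighborSet v = ⇑σ ⁻¹' (H.neighborSet (σ v)) := rfl
  rw [deg, hns, Set.ncard_preimage_of_injective_subset_range σ.injective
    (by rw [Equiv.range_eq_univ]; exact Set.subset_univ _)]
  rfl

lemma colorable_comap_iff {α β : Type*} (σ : α ≃ β) (H : SimpleGraph β) (m : ℕ) :
    (H.comap σ).Colorable m ↔ H.Colorable m := by
  constructor
  · exact fun h => SimpleGraph.Colorable.of_hom (SimpleGraph.Iso.comap σ H).symm.toEmbedding.toHom h
  · exact fun h => SimpleGraph.Colorable.of_hom (SimpleGraph.Iso.comap σ H).toEmbedding.toHom h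

lemma chromNum_comap {α β : Type*} [Fintype α] [Fintype β] (σ : α ≃ β) (H : SimpleGraph β) :
    chromNum (H.comap σ) = chromNum H := by
  rw [chromNum, chromNum]
  congr 1
  ext m
  exact colorable_comap_iff σ H m

lemma deltaEps_comap {α β : Type*} [Fintype α] [Fintype β] (σ : α ≃ β) (H : SimpleGraph β)
    (ε : ℝ) : deltaEps ε (H.comap σ) = deltaEps ε H := by
  rw [deltaEps, deltaEps]
  congr 2
  ext x
  constructor
  · rintro ⟨u, v, huv, rfl⟩
    exact ⟨σ u, σ v, huv, by rw [deg_comap, deg_comap]⟩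
  · rintro ⟨u, v, huv, rfl⟩
    refine ⟨σ.symm u, σ.symm v, ?_, ?_⟩
    · show H.Adj (σ (σ.symm u)) (σ (σ.symm v))
      simpa using huv
    · rw [deg_comap, deg_comap, Equiv.apply_symm_apply, Equiv.apply_symm_apply]

lemma cliqueNum_comap_le {α : Type*} [Fintype α] (σ : α ≃ (Fin (2*k+1) ⊕ Fin (2*k)))
    (hk : 1 ≤ k) : ((Gk k).comap σ).cliqueNum ≤ 2*k := by
  apply csSup_le
  · exact ⟨0, ∅, SimpleGraph.isNClique_empty.mpr rfl⟩
  · rintro m ⟨s, hcl, hcard⟩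
    have ht : (Gk k).IsClique ↑(s.image σ) := by
      intro x hx y hy hne
      simp only [Finset.coe_image, Set.mem_image, Finset.mem_coe] at hx hy
      obtain ⟨u, hu, rfl⟩ := hx
      obtain ⟨v, hv, rfl⟩ := hy
      exact hcl hu hv (fun h => hne (by rw [h]))
    have := clique_card_le hk (s.image σ) ht
    rw [Finset.card_image_of_injective _ σ.injective, hcard] at this
    exact this

end Aux

theorem stmt9 (ε : ℝ) (h0 : 0 < ε) (h1 : ε ≤ 1) :
    ∃ (n : ℕ) (G : SimpleGraph (Fin n)),
      1 + 2 / ε - 1 ≤ (deltaEps ε G : ℝ) ∧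
      max (G.cliqueNum) (deltaEps ε G) < chromNum G := by
  set k : ℕ := ⌈1/ε⌉₊ with hkdef
  have hk : 1 ≤ k := Nat.one_le_iff_ne_zero.mpr (by
    rw [hkdef]
    simp only [ne_eq, Nat.ceil_eq_zero, not_le]
    positivity)
  have hinv_le : 1/ε ≤ (k:ℝ) := Nat.le_ceil _
  have hlt : ε * ((k:ℝ) - 1) < 1 := by
    have h2 : (k:ℝ) < 1/ε + 1 := Nat.ceil_lt_add_one (by positivity)
    have : (k:ℝ) - 1 < 1/ε := by linarith
    calc ε * ((k:ℝ) - 1) < ε * (1/ε) := by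
          apply mul_lt_mul_of_pos_left this h0
      _ = 1 := by field_simp
  set e : Fin (2*k+1 + 2*k) ≃ (Fin (2*k+1) ⊕ Fin (2*k)) := finSumFinEquiv.symm with he
  refine ⟨2*k+1 + 2*k, (Gk k).comap e, ?_, ?_⟩
  · rw [deltaEps_comap, deltaEps_Gk hk h0 h1 hlt]
    have : 2/ε ≤ 2*(k:ℝ) := by
      rw [div_le_iff₀ h0] at hinv_le ⊢
      · linarith
    push_cast
    linarith
  · rw [deltaEps_comap, deltaEps_Gk hk h0 h1 hlt, chromNum_comap, chromNum_Gk hk]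
    have h2 := cliqueNum_comap_le e hk
    omega
end

section
/- For n ≥ 4, the graph F_n formed from the disjoint union of (K_n minus an edge xy) and K_{n−1} by joining ⌊(n−1)/2⌋ vertices of the K_{n−1} to x and the remaining ⌈(n−1)/2⌉ vertices of the K_{n−1} to y satisfies χ(F_n) = n. -/
open SimpleGraph Classical

lemma fn_adj_inl_inl (n : ℕ) (i j : Fin n) :
    (Fn n).Adj (Sum.inl i) (Sum.inl j) ↔
      i ≠ j ∧ ¬((i:ℕ)=0∧(j:ℕ)=1) ∧ ¬((i:ℕ)=1∧(j:ℕ)=0) := by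
  simp only [Fn, fromRel_adj, FnRel, ne_eq, Sum.inl.injEq]
  tauto

lemma fn_adj_inr_inr (n : ℕ) (a b : Fin (n-1)) :
    (Fn n).Adj (Sum.inr a) (Sum.inr b) ↔ a ≠ b := by
  simp [Fn, fromRel_adj, FnRel]

lemma fn_adj_inl_inr (n : ℕ) (i : Fin n) (a : Fin (n-1)) :
    (Fn n).Adj (Sum.inl i) (Sum.inr a) ↔
      ((i:ℕ)=0 ∧ (a:ℕ) < (n-1)/2) ∨ ((i:ℕ)=1 ∧ (n-1)/2 ≤ (a:ℕ)) := by
  simp [Fn, fromRel_adj, FnRel]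

lemma fn_colorable (n : ℕ) (hn : 4 ≤ n) : (Fn n).Colorable n := by
  have hc : ∀ a : Fin (n-1), (a:ℕ) + 1 < n := fun a => by omega
  refine ⟨SimpleGraph.Coloring.mk
    (fun v => match v with
      | Sum.inl i => i
      | Sum.inr a => ⟨(a:ℕ)+1, hc a⟩) ?_⟩
  rintro (i|a) (j|b) hadj
  · rw [fn_adj_inl_inl] at hadj; simpa using hadj.1
  · rw [fn_adj_inl_inr] at hadj
    simp only [ne_eq, Fin.ext_iff]
    omega
  · rw [(Fn n).adj_comm, fn_adj_inl_inr] at hadj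
    simp only [ne_eq, Fin.ext_iff]
    omega
  · rw [fn_adj_inr_inr] at hadj
    simp only [ne_eq, Fin.ext_iff]
    simp only [ne_eq, Fin.ext_iff] at hadj
    omega

lemma fn_not_colorable (n : ℕ) (hn : 4 ≤ n) : ¬ (Fn n).Colorable (n-1) := by
  rintro ⟨C⟩
  -- Step 1: C (inl 0) = C (inl 1)
  set x : Fin n := ⟨0, by omega⟩
  set y : Fin n := ⟨1, by omega⟩
  have hxy : C (Sum.inl x) = C (Sum.inl y) := by
    by_contra hne
    -- the map from {i // i ≠ y} to Fin (n-1) is injective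
    have hinj : Function.Injective (fun i : {i : Fin n // i ≠ y} => C (Sum.inl i.1)) := by
      rintro ⟨i, hi⟩ ⟨j, hj⟩ h
      simp only at h
      by_contra hij
      have hij' : i ≠ j := by simpa using hij
      have : (Fn n).Adj (Sum.inl i) (Sum.inl j) := by
        rw [fn_adj_inl_inl]
        exact ⟨hij', fun ⟨h1,h2⟩ => hj (Fin.ext h2), fun ⟨h1,h2⟩ => hi (Fin.ext h1)⟩
      exact C.valid this h
    have hsurj : Function.Surjective (fun i : {i : Fin n // i ≠ y} => C (Sum.inl i.1)) := by
      have : Fintype.card {i : Fin n // i ≠ y} = Fintype.card (Fin (n-1)) := by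
        simp [Fintype.card_subtype_compl]
      exact (Fintype.bijective_iff_injective_and_card _).2 ⟨hinj, this⟩ |>.2
    obtain ⟨⟨i, hi⟩, h⟩ := hsurj (C (Sum.inl y))
    simp only at h
    -- i ≠ y, and C(inl i) = C(inl y), so i not adjacent to y, forcing i = x
    have hix : i = x := by
      by_contra hix
      have : (Fn n).Adj (Sum.inl i) (Sum.inl y) := by
        rw [fn_adj_inl_inl]
        exact ⟨hi, fun ⟨h1,h2⟩ => hix (Fin.ext h1), fun ⟨h1,h2⟩ => by simp [y] at h2⟩
      exact C.valid this h
    exact hne (hix ▸ h)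
  -- Step 2: some inr has color C (inl x)
  have hinj2 : Function.Injective (fun a : Fin (n-1) => C (Sum.inr a)) := by
    intro a b h
    by_contra hab
    exact C.valid ((fn_adj_inr_inr n a b).2 hab) h
  have hsurj2 : Function.Surjective (fun a : Fin (n-1) => C (Sum.inr a)) :=
    Finite.surjective_of_injective hinj2
  obtain ⟨a, ha⟩ := hsurj2 (C (Sum.inl x))
  simp only at ha
  by_cases hcase : (a:ℕ) < (n-1)/2
  · have : (Fn n).Adj (Sum.inl x) (Sum.inr a) := by
      rw [fn_adj_inl_inr]; left; exact ⟨rfl, hcase⟩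
    exact C.valid this ha.symm
  · have : (Fn n).Adj (Sum.inl y) (Sum.inr a) := by
      rw [fn_adj_inl_inr]; right; exact ⟨rfl, by omega⟩
    exact C.valid this (by rw [← hxy]; exact ha.symm)


theorem stmt10 (n : ℕ) (hn : 4 ≤ n) : chromNum (Fn n) = n := by
  have h1 : (Fn n).Colorable n := fn_colorable n hn
  have h2 : ¬ (Fn n).Colorable (n-1) := fn_not_colorable n hn
  refine le_antisymm (Nat.sInf_le h1) (le_csInf ⟨n, h1⟩ ?_)
  intro m hm
  by_contra hlt
  have hm' : (Fn n).Colorable m := hm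
  exact h2 (hm'.mono (by omega))
end

section
/- For n ≥ 4, the graph F_n (disjoint union of K_n minus an edge xy and K_{n−1}, joining ⌊(n−1)/2⌋ vertices of the K_{n−1} to x and the other ⌈(n−1)/2⌉ to y) has clique number ω(F_n) = n − 1 < χ(F_n). -/
open SimpleGraph Classical

lemma Fn_adj (n : ℕ) (u v) : (Fn n).Adj u v ↔ u ≠ v ∧ (FnRel n u v ∨ FnRel n v u) :=
  SimpleGraph.fromRel_adj _ _ _

lemma adj_inr_inr_s11 (n : ℕ) {a b : Fin (n-1)} (h : a ≠ b) :
    (Fn n).Adj (Sum.inr a) (Sum.inr b) := by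
  rw [Fn_adj]
  exact ⟨by simpa using h, Or.inl trivial⟩

lemma adj_inl_inl_s11 (n : ℕ) {i j : Fin n} (h : i ≠ j)
    (h1 : ¬((i : ℕ) = 0 ∧ (j : ℕ) = 1)) (h2 : ¬((i : ℕ) = 1 ∧ (j : ℕ) = 0)) :
    (Fn n).Adj (Sum.inl i) (Sum.inl j) := by
  rw [Fn_adj]
  exact ⟨by simpa using h, Or.inl ⟨h1, h2⟩⟩

lemma adj_inl_inr_left (n : ℕ) {i : Fin n} {a : Fin (n-1)} (h : (i : ℕ) = 0)
    (ha : (a : ℕ) < (n-1)/2) : (Fn n).Adj (Sum.inl i) (Sum.inr a) := by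
  rw [Fn_adj]
  exact ⟨by simp, Or.inl (Or.inl ⟨h, ha⟩)⟩

lemma adj_inl_inr_right (n : ℕ) {i : Fin n} {a : Fin (n-1)} (h : (i : ℕ) = 1)
    (ha : (n-1)/2 ≤ (a : ℕ)) : (Fn n).Adj (Sum.inl i) (Sum.inr a) := by
  rw [Fn_adj]
  exact ⟨by simp, Or.inl (Or.inr ⟨h, ha⟩)⟩

lemma adj_inl_inr_cases (n : ℕ) {i : Fin n} {a : Fin (n-1)}
    (h : (Fn n).Adj (Sum.inl i) (Sum.inr a)) :
    ((i : ℕ) = 0 ∧ (a : ℕ) < (n-1)/2) ∨ ((i : ℕ) = 1 ∧ (n-1)/2 ≤ (a : ℕ)) := by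
  rw [Fn_adj] at h
  rcases h.2 with h | h
  · exact h
  · exact h.elim

lemma not_adj_01 (n : ℕ) {i j : Fin n} (h0 : (i : ℕ) = 0) (h1 : (j : ℕ) = 1) :
    ¬ (Fn n).Adj (Sum.inl i) (Sum.inl j) := by
  rw [Fn_adj]
  rintro ⟨-, h | h⟩
  · exact h.1 ⟨h0, h1⟩
  · exact h.2 ⟨h1, h0⟩

example : True := trivial

lemma not_colorable (n : ℕ) (hn : 4 ≤ n) : ¬ (Fn n).Colorable (n - 1) := by
  rintro ⟨C⟩
  have h0n : (0 : ℕ) < n := by omega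
  have h1n : (1 : ℕ) < n := by omega
  set x : Fin n ⊕ Fin (n-1) := Sum.inl ⟨0, h0n⟩ with hx
  set y : Fin n ⊕ Fin (n-1) := Sum.inl ⟨1, h1n⟩ with hy
  -- f : colors of left vertices 1..n-1
  have hsucc : ∀ k : Fin (n-1), (k : ℕ) + 1 < n := fun k => by omega
  set f : Fin (n-1) → Fin (n-1) := fun k => C (Sum.inl ⟨(k : ℕ) + 1, hsucc k⟩) with hf
  have finj : Function.Injective f := by
    intro k k' hkk'
    by_contra hne
    have hv : (k : ℕ) ≠ (k' : ℕ) := fun h => hne (Fin.ext h)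
    exact C.valid (adj_inl_inl_s11 n (Fin.ne_of_val_ne (by simp only [Fin.val_mk]; omega))
      (by simp only [Fin.val_mk]; omega) (by simp only [Fin.val_mk]; omega)) hkk'
  have fsurj : Function.Surjective f := Finite.surjective_of_injective finj
  obtain ⟨k, hk⟩ := fsurj (C x)
  -- k must be 0, giving C y = C x
  have hk0 : (k : ℕ) = 0 := by
    by_contra hne
    exact C.valid (adj_inl_inl_s11 n (Fin.ne_of_val_ne (by simp only [Fin.val_mk]; omega))
      (by simp only [Fin.val_mk]; omega) (by simp only [Fin.val_mk]; omega)) hk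
  have hyx : C y = C x := by
    have : (⟨(k : ℕ) + 1, hsucc k⟩ : Fin n) = ⟨1, h1n⟩ := by simp [Fin.ext_iff, hk0]
    rw [hy, ← this]; exact hk
  -- g : colors of right vertices
  set g : Fin (n-1) → Fin (n-1) := fun a => C (Sum.inr a) with hg
  have ginj : Function.Injective g := by
    intro a b hab
    by_contra hne
    exact C.valid (adj_inr_inr_s11 n hne) hab
  obtain ⟨a, ha⟩ := Finite.surjective_of_injective ginj (C x)
  rcases lt_or_ge (a : ℕ) ((n-1)/2) with hlt | hle
  · exact C.valid (adj_inl_inr_left n (i := ⟨0, h0n⟩) rfl hlt) ha.symm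
  · exact C.valid (adj_inl_inr_right n (i := ⟨1, h1n⟩) rfl hle) (hyx.trans ha.symm)

lemma clique_bound (n : ℕ) (hn : 4 ≤ n) (s : Finset (Fin n ⊕ Fin (n-1)))
    (hs : (Fn n).IsClique s) : s.card ≤ n - 1 := by
  have hadj : ∀ u ∈ s, ∀ v ∈ s, u ≠ v → (Fn n).Adj u v := fun u hu v hv hne =>
    hs (Finset.mem_coe.mpr hu) (Finset.mem_coe.mpr hv) hne
  -- not both a val-0 left and val-1 left vertex
  have hnotboth : ∀ i ∈ s, ∀ j ∈ s, ∀ i' : Fin n, ∀ j' : Fin n,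
      i = Sum.inl i' → j = Sum.inl j' → (i' : ℕ) = 0 → (j' : ℕ) ≠ 1 := by
    rintro _ hi _ hj i' j' rfl rfl h0 h1
    exact not_adj_01 n h0 h1 (hadj _ hi _ hj (by simp [Fin.ext_iff]; omega))
  have hhalf : (n-1)/2 < n - 1 := by omega
  by_cases hA : ∃ a : Fin (n-1), Sum.inr a ∈ s
  · obtain ⟨a, ha⟩ := hA
    -- every left vertex in s has val 0 or 1
    have hL : ∀ i : Fin n, Sum.inl i ∈ s → (i : ℕ) = 0 ∨ (i : ℕ) = 1 := by
      intro i hi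
      rcases adj_inl_inr_cases n (hadj _ hi _ ha (by simp)) with h | h
      · exact Or.inl h.1
      · exact Or.inr h.1
    by_cases h0 : ∃ i : Fin n, Sum.inl i ∈ s ∧ (i : ℕ) = 0
    · obtain ⟨i0, hi0, hi0v⟩ := h0
      -- all left vertices have val 0; all right vertices < (n-1)/2
      have hL0 : ∀ i : Fin n, Sum.inl i ∈ s → (i : ℕ) = 0 := by
        intro i hi
        rcases hL i hi with h | h
        · exact h
        · exact absurd h (hnotboth _ hi0 _ hi i0 i rfl rfl hi0v)
      have hR : ∀ b : Fin (n-1), Sum.inr b ∈ s → (b : ℕ) < (n-1)/2 := by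
        intro b hb
        rcases adj_inl_inr_cases n (hadj _ hi0 _ hb (by simp)) with h | h
        · exact h.2
        · omega
      refine (Finset.card_le_card_of_injOn (s := s) (t := Finset.range (n-1))
        (Sum.elim (fun _ => (n-1)/2) (fun b => (b : ℕ))) ?_ ?_).trans
        (le_of_eq (Finset.card_range _))
      · rintro (i | b) hv
        · simp only [Sum.elim_inl, Finset.mem_coe, Finset.mem_range]; omega
        · simp only [Sum.elim_inl, Sum.elim_inr, Finset.mem_coe, Finset.mem_range]; omega
      · rintro (i | b) hv (j | c) hw h
        · have := hL0 i hv; have := hL0 j hw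
          simp only [Sum.inl.injEq]; exact Fin.ext (by omega)
        · exact absurd h (by have := hR c hw; simp only [Sum.elim_inl, Sum.elim_inr]; omega)
        · exact absurd h (by have := hR b hv; simp only [Sum.elim_inl, Sum.elim_inr]; omega)
        · simp only [Sum.elim_inr, Sum.inr.injEq] at h ⊢; exact Fin.ext h
    · by_cases h1 : ∃ i : Fin n, Sum.inl i ∈ s ∧ (i : ℕ) = 1
      · obtain ⟨i1, hi1, hi1v⟩ := h1
        have hL1 : ∀ i : Fin n, Sum.inl i ∈ s → (i : ℕ) = 1 := by
          intro i hi
          rcases hL i hi with h | h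
          · exact absurd hi (fun hi => h0 ⟨i, hi, h⟩)
          · exact h
        have hR : ∀ b : Fin (n-1), Sum.inr b ∈ s → (n-1)/2 ≤ (b : ℕ) := by
          intro b hb
          rcases adj_inl_inr_cases n (hadj _ hi1 _ hb (by simp)) with h | h
          · omega
          · exact h.2
        refine (Finset.card_le_card_of_injOn (s := s) (t := Finset.range (n-1))
          (Sum.elim (fun _ => 0) (fun b => (b : ℕ))) ?_ ?_).trans
          (le_of_eq (Finset.card_range _))
        · rintro (i | b) hv
          · simp only [Sum.elim_inl, Sum.elim_inr, Finset.mem_coe, Finset.mem_range]; omega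
          · simp only [Sum.elim_inl, Sum.elim_inr, Finset.mem_coe, Finset.mem_range]; omega
        · rintro (i | b) hv (j | c) hw h
          · have := hL1 i hv; have := hL1 j hw
            simp only [Sum.inl.injEq]; exact Fin.ext (by omega)
          · exact absurd h (by have := hR c hw; simp only [Sum.elim_inl, Sum.elim_inr]; omega)
          · exact absurd h (by have := hR b hv; simp only [Sum.elim_inl, Sum.elim_inr]; omega)
          · simp only [Sum.elim_inr, Sum.inr.injEq] at h ⊢; exact Fin.ext h
      · -- no left vertices at all
        refine (Finset.card_le_card_of_injOn (s := s) (t := Finset.range (n-1))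
          (Sum.elim (fun _ => 0) (fun b => (b : ℕ))) ?_ ?_).trans
          (le_of_eq (Finset.card_range _))
        · rintro (i | b) hv
          · exact absurd (hL i hv) (by rintro (h | h) <;> [exact h0 ⟨i, hv, h⟩; exact h1 ⟨i, hv, h⟩])
          · simp only [Sum.elim_inl, Sum.elim_inr, Finset.mem_coe, Finset.mem_range]; omega
        · rintro (i | b) hv (j | c) hw h
          · exact absurd (hL i hv) (by rintro (h' | h') <;> [exact h0 ⟨i, hv, h'⟩; exact h1 ⟨i, hv, h'⟩])
          · exact absurd (hL i hv) (by rintro (h' | h') <;> [exact h0 ⟨i, hv, h'⟩; exact h1 ⟨i, hv, h'⟩])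
          · exact absurd (hL j hw) (by rintro (h' | h') <;> [exact h0 ⟨j, hw, h'⟩; exact h1 ⟨j, hw, h'⟩])
          · simp only [Sum.elim_inr, Sum.inr.injEq] at h ⊢; exact Fin.ext h
  · -- no right vertices
    push_neg at hA
    by_cases h0 : ∃ i : Fin n, Sum.inl i ∈ s ∧ (i : ℕ) = 0
    · obtain ⟨i0, hi0, hi0v⟩ := h0
      have hno1 : ∀ i : Fin n, Sum.inl i ∈ s → (i : ℕ) ≠ 1 :=
        fun i hi => hnotboth _ hi0 _ hi i0 i rfl rfl hi0v
      refine (Finset.card_le_card_of_injOn (s := s) (t := Finset.range (n-1))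
        (Sum.elim (fun i : Fin n => if (i : ℕ) = 0 then 0 else (i : ℕ) - 1) (fun _ => 0)) ?_ ?_).trans (le_of_eq (Finset.card_range _))
      · rintro (i | b) hv
        · simp only [Sum.elim_inl, Sum.elim_inr, Finset.mem_coe, Finset.mem_range]
          split <;> omega
        · exact absurd hv (hA b)
      · rintro (i | b) hv (j | c) hw h
        · have hi1 := hno1 i hv; have hj1 := hno1 j hw
          simp only [Sum.elim_inl, Sum.elim_inr] at h
          simp only [Sum.inl.injEq]
          refine Fin.ext ?_
          split at h <;> split at h <;> omega
        · exact absurd hw (hA c)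
        · exact absurd hv (hA b)
        · exact absurd hv (hA b)
    · push_neg at h0
      refine (Finset.card_le_card_of_injOn (s := s) (t := Finset.range (n-1))
        (Sum.elim (fun i : Fin n => (i : ℕ) - 1) (fun _ => 0)) ?_ ?_).trans (le_of_eq (Finset.card_range _))
      · rintro (i | b) hv
        · simp only [Sum.elim_inl, Sum.elim_inr, Finset.mem_coe, Finset.mem_range]
          have := h0 i hv; omega
        · exact absurd hv (hA b)
      · rintro (i | b) hv (j | c) hw h
        · have hi0 := h0 i hv; have hj0 := h0 j hw
          simp only [Sum.elim_inl, Sum.elim_inr] at h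
          simp only [Sum.inl.injEq]
          exact Fin.ext (by omega)
        · exact absurd hw (hA c)
        · exact absurd hv (hA b)
        · exact absurd hv (hA b)

theorem stmt11 (n : ℕ) (hn : 4 ≤ n) :
    (Fn n).cliqueNum = n - 1 ∧ n - 1 < chromNum (Fn n) := by
  constructor
  · refine le_antisymm ?_ ?_
    · obtain ⟨s, hs⟩ := (Fn n).exists_isNClique_cliqueNum
      rw [← hs.card_eq]
      exact clique_bound n hn s hs.isClique
    · have hclique : (Fn n).IsClique
          ((Finset.univ.image Sum.inr : Finset (Fin n ⊕ Fin (n-1))) : Set _) := by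
        intro u hu v hv huv
        simp only [Finset.coe_image, Set.mem_image, Finset.coe_univ, Set.image_univ,
          Set.mem_range] at hu hv
        obtain ⟨a, rfl⟩ := hu
        obtain ⟨b, rfl⟩ := hv
        exact adj_inr_inr_s11 n (fun h => huv (by rw [h]))
      have hcard : (Finset.univ.image Sum.inr : Finset (Fin n ⊕ Fin (n-1))).card = n - 1 := by
        rw [Finset.card_image_of_injective _ Sum.inr_injective]
        simp
      calc n - 1 = _ := hcard.symm
        _ ≤ (Fn n).cliqueNum := hclique.card_le_cliqueNum
  · by_contra hle
    push_neg at hle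
    have hne : {m | (Fn n).Colorable m}.Nonempty :=
      ⟨Fintype.card (Fin n ⊕ Fin (n-1)), (Fn n).colorable_of_fintype⟩
    have hmem : (Fn n).Colorable (chromNum (Fn n)) := Nat.sInf_mem hne
    exact not_colorable n hn (hmem.mono hle)
end

section
/- There is no integer t such that every finite simple graph G with Δ₂(G) ≥ t satisfies χ(G) ≤ max{ω(G), Δ₂(G)}; that is, for every t there exists a finite simple graph G with Δ₂(G) ≥ t and χ(G) > max{ω(G), Δ₂(G)}. -/
open SimpleGraph Classical

/-- arithmetic adjacency predicate -/
def myP (k a b : ℕ) : Prop :=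
  (a < 2*k+1 ∧ b < 2*k+1 ∧ ¬(a = 0 ∧ b = 1) ∧ ¬(a = 1 ∧ b = 0)) ∨
  (2*k+1 ≤ a ∧ 2*k+1 ≤ b) ∨
  (a = 0 ∧ 2*k+1 ≤ b ∧ b < 3*k+1) ∨
  (a = 1 ∧ 3*k+1 ≤ b)

def myG (k : ℕ) : SimpleGraph (Fin (4*k+1)) :=
  SimpleGraph.fromRel (fun u v => myP k u.val v.val)

lemma myG_adj {k : ℕ} {u v : Fin (4*k+1)} :
    (myG k).Adj u v ↔ u.val ≠ v.val ∧ (myP k u.val v.val ∨ myP k v.val u.val) := by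
  simp [myG, SimpleGraph.fromRel_adj, ne_eq, Fin.ext_iff]

lemma card_le_aux {N m : ℕ} (hm : 0 < m) (s : Finset (Fin N)) (f : Fin N → ℕ)
    (hlt : ∀ z ∈ s, f z < m)
    (hinj : ∀ z ∈ s, ∀ w ∈ s, f z = f w → z = w) : s.card ≤ m := by
  have h := Finset.card_le_card_of_injOn (s := s) (t := (Finset.univ : Finset (Fin m)))
      (fun z => (⟨f z % m, Nat.mod_lt _ hm⟩ : Fin m))
      (fun z _ => Finset.mem_univ _) ?_
  · simpa using h
  · intro a ha b hb hab
    apply hinj a (by simpa using ha) b (by simpa using hb)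
    have h2 : f a % m = f b % m := congrArg Fin.val hab
    rwa [Nat.mod_eq_of_lt (hlt a (by simpa using ha)),
      Nat.mod_eq_of_lt (hlt b (by simpa using hb))] at h2

lemma aux_le_card {N m : ℕ} (s : Finset (Fin N)) (f : Fin m → Fin N)
    (hmem : ∀ i, f i ∈ s) (hinj : Function.Injective f) : m ≤ s.card := by
  have h := Finset.card_le_card_of_injOn (s := (Finset.univ : Finset (Fin m))) (t := s) f (fun i _ => hmem i) hinj.injOn
  simpa using h

lemma deg_eq {V : Type*} [Fintype V] (G : SimpleGraph V) (v : V) :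
    deg G v = (G.neighborSet v).toFinset.card :=
  Set.ncard_eq_toFinset_card' _

lemma deg_le_s14 (k : ℕ) (hk : 1 ≤ k) (w : Fin (4*k+1)) (h0 : w.val ≠ 0) (h1 : w.val ≠ 1) :
    deg (myG k) w ≤ 2*k := by
  rw [deg_eq]
  by_cases hw : w.val < 2*k+1
  · apply card_le_aux (by omega) _ (fun z => if z.val < w.val then z.val else z.val - 1)
    · intro z hz
      rw [Set.mem_toFinset, SimpleGraph.mem_neighborSet, myG_adj] at hz
      have hz' : z.val < 2*k+1 ∧ z.val ≠ w.val := by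
        obtain ⟨hne, h | h⟩ := hz <;> unfold myP at h <;> omega
      split_ifs <;> omega
    · intro a ha b hb hab
      rw [Set.mem_toFinset, SimpleGraph.mem_neighborSet, myG_adj] at ha hb
      have ha' : a.val < 2*k+1 ∧ a.val ≠ w.val := by
        obtain ⟨hne, h | h⟩ := ha <;> unfold myP at h <;> omega
      have hb' : b.val < 2*k+1 ∧ b.val ≠ w.val := by
        obtain ⟨hne, h | h⟩ := hb <;> unfold myP at h <;> omega
      apply Fin.ext
      split_ifs at hab <;> omega
  · have hw4 : w.val ≤ 4*k := by have := w.isLt; omega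
    apply card_le_aux (by omega) _
      (fun z => if z.val < 2 then 0 else if z.val < w.val then z.val - 2*k else z.val - (2*k+1))
    · intro z hz
      rw [Set.mem_toFinset, SimpleGraph.mem_neighborSet, myG_adj] at hz
      have hz' : (z.val = 0 ∧ w.val < 3*k+1) ∨ (z.val = 1 ∧ 3*k+1 ≤ w.val) ∨
          (2*k+1 ≤ z.val ∧ z.val ≠ w.val) := by
        obtain ⟨hne, h | h⟩ := hz <;> unfold myP at h <;> omega
      split_ifs <;> omega
    · intro a ha b hb hab
      rw [Set.mem_toFinset, SimpleGraph.mem_neighborSet, myG_adj] at ha hb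
      have ha' : (a.val = 0 ∧ w.val < 3*k+1) ∨ (a.val = 1 ∧ 3*k+1 ≤ w.val) ∨
          (2*k+1 ≤ a.val ∧ a.val ≠ w.val) := by
        obtain ⟨hne, h | h⟩ := ha <;> unfold myP at h <;> omega
      have hb' : (b.val = 0 ∧ w.val < 3*k+1) ∨ (b.val = 1 ∧ 3*k+1 ≤ w.val) ∨
          (2*k+1 ≤ b.val ∧ b.val ≠ w.val) := by
        obtain ⟨hne, h | h⟩ := hb <;> unfold myP at h <;> omega
      apply Fin.ext
      split_ifs at hab <;> omega

lemma deg_ge (k : ℕ) (_hk : 1 ≤ k) (w : Fin (4*k+1)) (h2 : 2 ≤ w.val) (hle : w.val ≤ 2*k) :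
    2*k ≤ deg (myG k) w := by
  rw [deg_eq]
  apply aux_le_card _ (fun i : Fin (2*k) =>
    (⟨if i.val < w.val then i.val else i.val + 1, by have := i.isLt; split_ifs <;> omega⟩ :
      Fin (4*k+1)))
  · intro i
    rw [Set.mem_toFinset, SimpleGraph.mem_neighborSet, myG_adj]
    have := i.isLt
    constructor
    · simp only []
      split_ifs <;> omega
    · left
      unfold myP
      left
      simp only []
      split_ifs <;> omega
  · intro i j hij
    have h := congrArg Fin.val hij
    simp only [] at h
    apply Fin.ext
    split_ifs at h <;> omega

lemma clique_adj {k : ℕ} {s : Finset (Fin (4*k+1))} (hs : (myG k).IsClique s)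
    {a b : Fin (4*k+1)} (ha : a ∈ s) (hb : b ∈ s) (hne : a ≠ b) : (myG k).Adj a b :=
  hs (Finset.mem_coe.mpr ha) (Finset.mem_coe.mpr hb) hne

lemma cliqueNum_le (k : ℕ) (hk : 1 ≤ k) : (myG k).cliqueNum ≤ 2*k := by
  rw [SimpleGraph.cliqueNum]
  apply csSup_le
  · exact ⟨0, ∅, SimpleGraph.isNClique_empty.mpr rfl⟩
  rintro n ⟨s, hs⟩
  rw [← hs.2]
  have hcl := hs.1
  by_cases hr : ∃ w ∈ s, 2*k+1 ≤ w.val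
  · obtain ⟨w, hw, hwv⟩ := hr
    have hw4 : w.val ≤ 4*k := by have := w.isLt; omega
    -- every vertex of s is 0, 1, or on the right
    have hchar : ∀ z ∈ s, z.val = 0 ∨ z.val = 1 ∨ 2*k+1 ≤ z.val := by
      intro z hz
      by_cases hzw : z = w
      · subst hzw; omega
      · have hadj := myG_adj.mp (clique_adj hcl hz hw hzw)
        obtain ⟨hne, h | h⟩ := hadj <;> unfold myP at h <;> omega
    by_cases h0 : ∃ z ∈ s, z.val = 0
    · obtain ⟨z0, hz0, hz0v⟩ := h0
      have hall : ∀ z ∈ s, z.val = 0 ∨ (2*k+1 ≤ z.val ∧ z.val < 3*k+1) := by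
        intro z hz
        rcases hchar z hz with h | h | h
        · exact Or.inl h
        · exfalso
          have hne : z0 ≠ z := by intro he; rw [he] at hz0v; omega
          have hadj := myG_adj.mp (clique_adj hcl hz0 hz hne)
          obtain ⟨_, hh | hh⟩ := hadj <;> unfold myP at hh <;> omega
        · right
          have hne : z0 ≠ z := by intro he; rw [he] at hz0v; omega
          have hadj := myG_adj.mp (clique_adj hcl hz0 hz hne)
          obtain ⟨_, hh | hh⟩ := hadj <;> unfold myP at hh <;> omega
      apply card_le_aux (by omega) _ (fun z => if z.val = 0 then 0 else z.val - 2*k)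
      · intro z hz
        have := hall z hz
        split_ifs <;> omega
      · intro a ha b hb hab
        have h1 := hall a ha; have h2 := hall b hb
        apply Fin.ext
        split_ifs at hab <;> omega
    · by_cases h1 : ∃ z ∈ s, z.val = 1
      · obtain ⟨z1, hz1, hz1v⟩ := h1
        have hall : ∀ z ∈ s, z.val = 1 ∨ (3*k+1 ≤ z.val) := by
          intro z hz
          rcases hchar z hz with h | h | h
          · exact absurd ⟨z, hz, h⟩ h0
          · exact Or.inl h
          · right
            have hne : z1 ≠ z := by intro he; rw [he] at hz1v; omega
            have hadj := myG_adj.mp (clique_adj hcl hz1 hz hne)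
            obtain ⟨_, hh | hh⟩ := hadj <;> unfold myP at hh <;> omega
        apply card_le_aux (by omega) _ (fun z => if z.val = 1 then 0 else z.val - 3*k)
        · intro z hz
          have := hall z hz
          have := z.isLt
          split_ifs <;> omega
        · intro a ha b hb hab
          have := hall a ha; have := hall b hb
          apply Fin.ext
          split_ifs at hab <;> omega
      · apply card_le_aux (by omega) _ (fun z => z.val - (2*k+1))
        · intro z hz
          rcases hchar z hz with h | h | h
          · exact absurd ⟨z, hz, h⟩ h0
          · exact absurd ⟨z, hz, h⟩ h1
          · have := z.isLt; omega
        · intro a ha b hb hab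
          rcases hchar a ha with h | h | h
          · exact absurd ⟨a, ha, h⟩ h0
          · exact absurd ⟨a, ha, h⟩ h1
          · rcases hchar b hb with h' | h' | h'
            · exact absurd ⟨b, hb, h'⟩ h0
            · exact absurd ⟨b, hb, h'⟩ h1
            · apply Fin.ext; omega
  · push_neg at hr
    have hl : ∀ z ∈ s, z.val < 2*k+1 := by intro z hz; have := hr z hz; omega
    by_cases h0 : ∃ z ∈ s, z.val = 0
    · obtain ⟨z0, hz0, hz0v⟩ := h0
      have h1 : ∀ z ∈ s, z.val ≠ 1 := by
        intro z hz hzv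
        have hne : z0 ≠ z := by intro he; rw [he] at hz0v; omega
        have hadj := myG_adj.mp (clique_adj hcl hz0 hz hne)
        obtain ⟨_, hh | hh⟩ := hadj <;> unfold myP at hh <;> omega
      apply card_le_aux (by omega) _ (fun z => if z.val = 0 then 0 else z.val - 1)
      · intro z hz
        have := hl z hz; have := h1 z hz
        split_ifs <;> omega
      · intro a ha b hb hab
        have := hl a ha; have := h1 a ha; have := hl b hb; have := h1 b hb
        apply Fin.ext
        split_ifs at hab <;> omega
    · apply card_le_aux (by omega) _ (fun z => z.val - 1)
      · intro z hz
        have := hl z hz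
        have : z.val ≠ 0 := fun h => h0 ⟨z, hz, h⟩
        omega
      · intro a ha b hb hab
        have : a.val ≠ 0 := fun h => h0 ⟨a, ha, h⟩
        have : b.val ≠ 0 := fun h => h0 ⟨b, hb, h⟩
        apply Fin.ext
        omega

lemma not_colorable_s14 (k : ℕ) (hk : 2 ≤ k) : ¬ (myG k).Colorable (2*k) := by
  rintro ⟨C⟩
  set v0 : Fin (4*k+1) := ⟨0, by omega⟩ with hv0
  set v1 : Fin (4*k+1) := ⟨1, by omega⟩ with hv1
  have hv0v : v0.val = 0 := rfl
  have hv1v : v1.val = 1 := rfl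
  set M : Finset (Fin (4*k+1)) := Finset.univ.filter (fun z => 2 ≤ z.val ∧ z.val ≤ 2*k) with hM
  have hMmem : ∀ z, z ∈ M ↔ (2 ≤ z.val ∧ z.val ≤ 2*k) := by
    intro z; simp [hM]
  have hMadj : ∀ a ∈ M, ∀ b ∈ M, a ≠ b → (myG k).Adj a b := by
    intro a ha b hb hne
    rw [hMmem] at ha hb
    rw [myG_adj]
    refine ⟨fun h => hne (Fin.ext h), Or.inl ?_⟩
    unfold myP; omega
  have hMinj : ∀ a ∈ M, ∀ b ∈ M, C a = C b → a = b := by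
    intro a ha b hb hC
    by_contra hne
    exact C.valid (hMadj a ha b hb hne) hC
  have hMcard : 2*k - 1 ≤ M.card := by
    apply aux_le_card M (fun i : Fin (2*k-1) => ⟨i.val + 2, by have := i.isLt; omega⟩)
    · intro i
      rw [hMmem]
      have := i.isLt
      simp only []
      omega
    · intro i j hij
      have h := congrArg Fin.val hij
      simp only [] at h
      exact Fin.ext (by omega)
  set CM : Finset (Fin (2*k)) := M.image C with hCM
  have hCMcard : CM.card = M.card :=
    Finset.card_image_of_injOn (fun a ha b hb h =>
      hMinj a (Finset.mem_coe.mp ha) b (Finset.mem_coe.mp hb) h)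
  have hc0 : C v0 ∉ CM := by
    intro h
    obtain ⟨m, hm, hCm⟩ := Finset.mem_image.mp h
    rw [hMmem] at hm
    have hadj : (myG k).Adj v0 m := by
      rw [myG_adj]
      refine ⟨by simp [hv0]; omega, Or.inl ?_⟩
      unfold myP
      omega
    exact C.valid hadj hCm.symm
  have hc1 : C v1 ∉ CM := by
    intro h
    obtain ⟨m, hm, hCm⟩ := Finset.mem_image.mp h
    rw [hMmem] at hm
    have hadj : (myG k).Adj v1 m := by
      rw [myG_adj]
      refine ⟨by simp [hv1]; omega, Or.inl ?_⟩
      unfold myP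
      omega
    exact C.valid hadj hCm.symm
  have hcompl : (CMᶜ : Finset (Fin (2*k))).card ≤ 1 := by
    rw [Finset.card_compl]
    simp only [Fintype.card_fin]
    omega
  have h01 : C v0 = C v1 :=
    Finset.card_le_one.mp hcompl _ (Finset.mem_compl.mpr hc0) _ (Finset.mem_compl.mpr hc1)
  set RS : Finset (Fin (4*k+1)) := Finset.univ.filter (fun z => 2*k+1 ≤ z.val) with hRS
  have hRSmem : ∀ z, z ∈ RS ↔ 2*k+1 ≤ z.val := by intro z; simp [hRS]
  have hRSadj : ∀ a ∈ RS, ∀ b ∈ RS, a ≠ b → (myG k).Adj a b := by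
    intro a ha b hb hne
    rw [hRSmem] at ha hb
    rw [myG_adj]
    refine ⟨fun h => hne (Fin.ext h), Or.inl ?_⟩
    unfold myP; omega
  have hRinj : ∀ a ∈ RS, ∀ b ∈ RS, C a = C b → a = b := by
    intro a ha b hb hC
    by_contra hne
    exact C.valid (hRSadj a ha b hb hne) hC
  have hRcard : 2*k ≤ RS.card := by
    apply aux_le_card RS (fun i : Fin (2*k) => ⟨2*k+1 + i.val, by have := i.isLt; omega⟩)
    · intro i
      rw [hRSmem]
      simp only []
      omega
    · intro i j hij
      have h := congrArg Fin.val hij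
      simp only [] at h
      exact Fin.ext (by omega)
  set CR : Finset (Fin (2*k)) := RS.image C with hCR
  have hCRcard : CR.card = RS.card :=
    Finset.card_image_of_injOn (fun a ha b hb h =>
      hRinj a (Finset.mem_coe.mp ha) b (Finset.mem_coe.mp hb) h)
  have hCRuniv : CR = Finset.univ := by
    apply Finset.eq_univ_of_card
    have h1 : CR.card ≤ 2*k := by
      have := Finset.card_le_univ CR
      simpa using this
    simp only [Fintype.card_fin]
    omega
  have : C v0 ∈ CR := hCRuniv ▸ Finset.mem_univ _
  obtain ⟨w, hw, hCw⟩ := Finset.mem_image.mp this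
  rw [hRSmem] at hw
  have hw4 : w.val ≤ 4*k := by have := w.isLt; omega
  by_cases hwv : w.val < 3*k+1
  · have hadj : (myG k).Adj v0 w := by
      rw [myG_adj]
      refine ⟨by simp [hv0]; omega, Or.inl ?_⟩
      unfold myP
      omega
    exact C.valid hadj hCw.symm
  · have hadj : (myG k).Adj v1 w := by
      rw [myG_adj]
      refine ⟨by simp [hv1]; omega, Or.inl ?_⟩
      unfold myP
      omega
    exact C.valid hadj (h01.symm.trans hCw.symm)

theorem stmt14 (t : ℕ) :
    ∃ (n : ℕ) (G : SimpleGraph (Fin n)),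
      t ≤ delta2 G ∧ max (G.cliqueNum) (delta2 G) < chromNum G := by
  
  have hk1 : 1 ≤ t + 2 := by omega
  have hk2 : 2 ≤ t + 2 := by omega
  set k := t + 2 with hkdef
  refine ⟨4*k+1, myG k, ?_, ?_⟩ <;>
  · have hSub : ∀ d ∈ {d | ∃ u v, (myG k).Adj u v ∧ d = min (deg (myG k) u) (deg (myG k) v)},
        d ≤ 2*k := by
      rintro d ⟨u, v, huv, rfl⟩
      obtain ⟨hne, hP⟩ := myG_adj.mp huv
      by_cases hu : u.val ≠ 0 ∧ u.val ≠ 1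
      · exact le_trans (min_le_left _ _) (deg_le_s14 k hk1 u hu.1 hu.2)
      · have hv : v.val ≠ 0 ∧ v.val ≠ 1 := by
          obtain h | h := hP <;> unfold myP at h <;> omega
        exact le_trans (min_le_right _ _) (deg_le_s14 k hk1 v hv.1 hv.2)
    set u2 : Fin (4*k+1) := ⟨2, by omega⟩ with hu2
    set u3 : Fin (4*k+1) := ⟨3, by omega⟩ with hu3
    have hu2v : u2.val = 2 := rfl
    have hu3v : u3.val = 3 := rfl
    have hadj : (myG k).Adj u2 u3 := by
      rw [myG_adj]
      refine ⟨by omega, Or.inl ?_⟩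
      unfold myP
      omega
    have hmem : (min (deg (myG k) u2) (deg (myG k) u3)) ∈
        {d | ∃ u v, (myG k).Adj u v ∧ d = min (deg (myG k) u) (deg (myG k) v)} :=
      ⟨u2, u3, hadj, rfl⟩
    have hBdd : BddAbove {d | ∃ u v, (myG k).Adj u v ∧ d = min (deg (myG k) u) (deg (myG k) v)} :=
      ⟨2*k, fun d hd => hSub d hd⟩
    have hdmin : 2*k ≤ min (deg (myG k) u2) (deg (myG k) u3) :=
      le_min (deg_ge k hk1 u2 (by omega) (by omega)) (deg_ge k hk1 u3 (by omega) (by omega))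
    have hd2ge : 2*k ≤ delta2 (myG k) := by
      unfold delta2
      exact le_trans hdmin (le_csSup hBdd hmem)
    have hd2le : delta2 (myG k) ≤ 2*k := by
      unfold delta2
      exact csSup_le ⟨_, hmem⟩ hSub
    have hchrom : 2*k+1 ≤ chromNum (myG k) := by
      unfold chromNum
      apply le_csInf
      · exact ⟨Fintype.card (Fin (4*k+1)), (myG k).colorable_of_fintype⟩
      intro m hm
      by_contra hlt
      push_neg at hlt
      exact not_colorable_s14 k hk2 (SimpleGraph.Colorable.mono (by omega) hm)
    have hcliq := cliqueNum_le k hk1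
    omega
end

section
/- Let G be a connected finite simple graph with χ(G) = Δ(G) + 1 and Δ(G) ≥ 3. Then G is the complete graph on Δ(G)+1 vertices. (Brooks' Theorem, contrapositive form: every connected graph with Δ ≥ 3 that is not complete satisfies χ(G) ≤ Δ(G).) -/
open SimpleGraph Classical
set_option linter.unusedSectionVars false
set_option maxHeartbeats 1000000

section BrooksAux
variable {V : Type*} [Fintype V]


/-- reachable within a set -/
def WIn (G : SimpleGraph V) (s : Set V) (u v : V) : Prop :=
  ∃ w : G.Walk u v, ∀ x ∈ w.support, x ∈ s

theorem WIn.refl {G : SimpleGraph V} {s : Set V} {u : V} (hu : u ∈ s) : WIn G s u u :=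
  ⟨SimpleGraph.Walk.nil, by simp [hu]⟩

theorem WIn.symm {G : SimpleGraph V} {s : Set V} {u v : V} (h : WIn G s u v) : WIn G s v u := by
  obtain ⟨w, hw⟩ := h
  exact ⟨w.reverse, by simpa using hw⟩

theorem WIn.trans {G : SimpleGraph V} {s : Set V} {u v x : V} (h : WIn G s u v)
    (h' : WIn G s v x) : WIn G s u x := by
  obtain ⟨w, hw⟩ := h; obtain ⟨w', hw'⟩ := h'
  refine ⟨w.append w', fun y hy => ?_⟩
  rw [SimpleGraph.Walk.mem_support_append_iff] at hy
  rcases hy with hy | hy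
  · exact hw y hy
  · exact hw' y hy

theorem WIn.mono {G : SimpleGraph V} {s t : Set V} {u v : V} (hst : s ⊆ t) (h : WIn G s u v) :
    WIn G t u v := by
  obtain ⟨w, hw⟩ := h; exact ⟨w, fun x hx => hst (hw x hx)⟩

theorem WIn.of_adj {G : SimpleGraph V} {s : Set V} {u v : V} (h : G.Adj u v) (hu : u ∈ s)
    (hv : v ∈ s) : WIn G s u v :=
  ⟨SimpleGraph.Walk.cons h SimpleGraph.Walk.nil, by
    intro x hx; simp [SimpleGraph.Walk.support_cons] at hx
    rcases hx with rfl | rfl <;> assumption⟩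

theorem WIn.mem_left {G : SimpleGraph V} {s : Set V} {u v : V} (h : WIn G s u v) : u ∈ s := by
  obtain ⟨w, hw⟩ := h; exact hw u w.start_mem_support

theorem WIn.mem_right {G : SimpleGraph V} {s : Set V} {u v : V} (h : WIn G s u v) : v ∈ s := by
  obtain ⟨w, hw⟩ := h; exact hw v w.end_mem_support

/-- connectivity within a set -/
def ConnOn (G : SimpleGraph V) (s : Set V) : Prop :=
  ∀ u ∈ s, ∀ v ∈ s, WIn G s u v

/-- first-hit decomposition: a walk to `y` inside `s` with `u ≠ y` yields a neighbor `p` of `y`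
reachable from `u` avoiding `y`. -/
theorem first_hit_aux {G : SimpleGraph V} {s : Set V} : ∀ {u y : V} (w : G.Walk u y),
    (∀ x ∈ w.support, x ∈ s) → u ≠ y → ∃ p, G.Adj p y ∧ WIn G (s \ {y}) u p := by
  intro u y w
  induction w with
  | nil => intro _ huy; exact absurd rfl huy
  | @cons a c y hadj rest ih =>
    intro hw huy
    have ha : a ∈ s := hw a (by simp [SimpleGraph.Walk.support_cons])
    have hrest : ∀ x ∈ rest.support, x ∈ s := fun x hx =>
      hw x (by simp [SimpleGraph.Walk.support_cons, hx])
    by_cases hcy : c = y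
    · subst hcy
      have ha' : a ∈ s \ {c} := ⟨ha, by simpa using huy⟩
      exact ⟨a, hadj, WIn.refl ha'⟩
    · obtain ⟨p, hp, hwin⟩ := ih hrest hcy
      have ha' : a ∈ s \ {y} := ⟨ha, by simpa using huy⟩
      have hc' : c ∈ s \ {y} := ⟨hrest c rest.start_mem_support, by simpa using hcy⟩
      exact ⟨p, hp, (WIn.of_adj hadj ha' hc').trans hwin⟩

theorem first_hit {G : SimpleGraph V} {s : Set V} {u y : V} (h : WIn G s u y) (huy : u ≠ y) :
    ∃ p, G.Adj p y ∧ WIn G (s \ {y}) u p := by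
  obtain ⟨w, hw⟩ := h
  exact first_hit_aux w hw huy

/-- component of `u` within `s` -/
def compIn (G : SimpleGraph V) (s : Set V) (u : V) : Set V := {v | WIn G s u v}

theorem compIn_eq {G : SimpleGraph V} {s : Set V} {u v : V} (h : WIn G s u v) :
    compIn G s v = compIn G s u := by
  ext x; exact ⟨fun hx => h.trans hx, fun hx => h.symm.trans hx⟩

theorem compIn_disjoint {G : SimpleGraph V} {s : Set V} {u v x : V} (h : ¬ WIn G s u v)
    (hx : x ∈ compIn G s u) (hx' : x ∈ compIn G s v) : False :=
  h (hx.trans hx'.symm)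



/-- greedy coloring along rank `f`, restricted to `s` -/
noncomputable def gcol (G : SimpleGraph V) (s : Set V) (f : V → ℕ) (v : V) : ℕ :=
  sInf {n | ∀ u, u ∈ s → G.Adj v u → f u < f v → gcol G s f u ≠ n}
termination_by f v
decreasing_by exact ‹f u < f v›

/-- the finset of earlier neighbors of `v` -/
noncomputable def earlier (G : SimpleGraph V) (s : Set V) (f : V → ℕ) (v : V) : Finset V :=
  Finset.univ.filter (fun u => u ∈ s ∧ G.Adj v u ∧ f u < f v)

theorem mem_earlier {G : SimpleGraph V} {s : Set V} {f : V → ℕ} {v u : V} :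
    u ∈ earlier G s f v ↔ u ∈ s ∧ G.Adj v u ∧ f u < f v := by
  rw [earlier, Finset.mem_filter]
  simp

theorem gcol_def (G : SimpleGraph V) (s : Set V) (f : V → ℕ) (v : V) :
    gcol G s f v = sInf {n | ∀ u, u ∈ s → G.Adj v u → f u < f v → gcol G s f u ≠ n} := by
  rw [gcol]

theorem gcol_set_eq (G : SimpleGraph V) (s : Set V) (f : V → ℕ) (v : V) :
    {n | ∀ u, u ∈ s → G.Adj v u → f u < f v → gcol G s f u ≠ n}
      = {n | n ∉ (earlier G s f v).image (gcol G s f)} := by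
  ext n
  simp only [Set.mem_setOf_eq]
  constructor
  · intro h hn
    rw [Finset.mem_image] at hn
    obtain ⟨u, hu, he⟩ := hn
    rw [earlier, Finset.mem_filter] at hu
    exact h u hu.2.1 hu.2.2.1 hu.2.2.2 he
  · intro h u hus hadj hf he
    exact h (Finset.mem_image.mpr ⟨u, by
      rw [earlier, Finset.mem_filter]; exact ⟨Finset.mem_univ u, hus, hadj, hf⟩, he⟩)

theorem sInf_compl_le_card (T : Finset ℕ) : sInf {n | n ∉ T} ≤ T.card := by
  have : ∃ n ≤ T.card, n ∉ T := by
    by_contra hcon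
    push_neg at hcon
    have hsub : Finset.range (T.card + 1) ⊆ T := by
      intro n hn
      rw [Finset.mem_range] at hn
      exact hcon n (Nat.lt_succ_iff.mp hn)
    have := Finset.card_le_card hsub
    simp at this
  obtain ⟨n, hn, hnT⟩ := this
  exact le_trans (Nat.sInf_le hnT) hn

theorem gcol_mem (G : SimpleGraph V) (s : Set V) (f : V → ℕ) (v : V) :
    ∀ u, u ∈ s → G.Adj v u → f u < f v → gcol G s f u ≠ gcol G s f v := by
  have hne : {n | ∀ u, u ∈ s → G.Adj v u → f u < f v → gcol G s f u ≠ n}.Nonempty := by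
    rw [gcol_set_eq]
    obtain ⟨n, hn⟩ := Infinite.exists_notMem_finset ((earlier G s f v).image (gcol G s f))
    exact ⟨n, hn⟩
  have := Nat.sInf_mem hne
  rw [← gcol_def] at this
  exact this

theorem gcol_le_card_image (G : SimpleGraph V) (s : Set V) (f : V → ℕ) (v : V) :
    gcol G s f v ≤ ((earlier G s f v).image (gcol G s f)).card := by
  rw [gcol_def, gcol_set_eq]
  exact sInf_compl_le_card _

theorem gcol_le_card (G : SimpleGraph V) (s : Set V) (f : V → ℕ) (v : V) :
    gcol G s f v ≤ (earlier G s f v).card :=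
  le_trans (gcol_le_card_image G s f v) Finset.card_image_le

/-- master lemma: bounds on greedy give a partial proper coloring -/
theorem pcolorable_of_rank (G : SimpleGraph V) (s : Set V) (f : V → ℕ) (k : ℕ) (hk : 0 < k)
    (hinj : Set.InjOn f s)
    (hb : ∀ v ∈ s, gcol G s f v < k) :
    ∃ c : V → Fin k, (∀ u ∈ s, ∀ v ∈ s, G.Adj u v → c u ≠ c v) ∧
      ∀ v ∈ s, (c v : ℕ) = gcol G s f v := by
  classical
  refine ⟨fun v => if h : v ∈ s then ⟨gcol G s f v, hb v h⟩ else ⟨0, hk⟩, ?_, ?_⟩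
  · intro u hu v hv hadj
    simp only [dif_pos hu, dif_pos hv]
    intro hcontra
    have heq : gcol G s f u = gcol G s f v := congrArg Fin.val hcontra
    have hfne : f u ≠ f v := fun hf => G.ne_of_adj hadj (hinj hu hv hf)
    rcases lt_or_gt_of_ne hfne with hlt | hlt
    · exact gcol_mem G s f v u hu hadj.symm hlt heq
    · exact gcol_mem G s f u v hv hadj hlt heq.symm
  · intro v hv; simp [dif_pos hv]


noncomputable def dIn (G : SimpleGraph V) (s : Set V) (v₀ v : V) : ℕ :=
  sInf {n | ∃ w : G.Walk v v₀, (∀ x ∈ w.support, x ∈ s) ∧ w.length = n}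

theorem dIn_nonempty {G : SimpleGraph V} {s : Set V} {v₀ v : V} (h : WIn G s v v₀) :
    {n | ∃ w : G.Walk v v₀, (∀ x ∈ w.support, x ∈ s) ∧ w.length = n}.Nonempty := by
  obtain ⟨w, hw⟩ := h; exact ⟨w.length, w, hw, rfl⟩

theorem dIn_spec {G : SimpleGraph V} {s : Set V} {v₀ v : V} (h : WIn G s v v₀) :
    ∃ w : G.Walk v v₀, (∀ x ∈ w.support, x ∈ s) ∧ w.length = dIn G s v₀ v :=
  Nat.sInf_mem (dIn_nonempty h)

theorem dIn_le {G : SimpleGraph V} {s : Set V} {v₀ v : V} (w : G.Walk v v₀)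
    (hw : ∀ x ∈ w.support, x ∈ s) : dIn G s v₀ v ≤ w.length :=
  Nat.sInf_le ⟨w, hw, rfl⟩

theorem dIn_lt_card {G : SimpleGraph V} {s : Set V} {v₀ v : V} (h : WIn G s v v₀) :
    dIn G s v₀ v < Fintype.card V := by
  obtain ⟨w, hw⟩ := h
  have hb : dIn G s v₀ v ≤ w.bypass.length :=
    dIn_le w.bypass (fun x hx => hw x (SimpleGraph.Walk.support_bypass_subset w hx))
  exact lt_of_le_of_lt hb (SimpleGraph.Walk.bypass_isPath w).length_lt

theorem dIn_eq_zero {G : SimpleGraph V} {s : Set V} {v₀ v : V} (h : WIn G s v v₀)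
    (h0 : dIn G s v₀ v = 0) : v = v₀ := by
  obtain ⟨w, _, hl⟩ := dIn_spec h
  rw [h0] at hl
  exact SimpleGraph.Walk.eq_of_length_eq_zero hl

theorem dIn_step {G : SimpleGraph V} {s : Set V} {v₀ v : V} (h : WIn G s v v₀) (hne : v ≠ v₀) :
    ∃ u ∈ s, G.Adj v u ∧ dIn G s v₀ u + 1 ≤ dIn G s v₀ v := by
  obtain ⟨w, hw, hl⟩ := dIn_spec h
  cases w with
  | nil => exact absurd rfl hne
  | @cons _ c _ hadj rest =>
    refine ⟨c, hw c (by simp [SimpleGraph.Walk.support_cons]), hadj, ?_⟩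
    have : dIn G s v₀ c ≤ rest.length :=
      dIn_le rest (fun x hx => hw x (by simp [SimpleGraph.Walk.support_cons, hx]))
    rw [SimpleGraph.Walk.length_cons] at hl
    omega

theorem exists_rank (G : SimpleGraph V) (s : Set V) (v₀ : V) (hv₀ : v₀ ∈ s)
    (hconn : ConnOn G s) :
    ∃ f : V → ℕ, Function.Injective f ∧ (∀ v, v ≠ v₀ → f v < f v₀) ∧
      (∀ v ∈ s, v ≠ v₀ → ∃ u ∈ s, G.Adj v u ∧ f v < f u) := by
  classical
  set C := Fintype.card V with hC
  have hC1 : 1 ≤ C := Fintype.card_pos_iff.mpr ⟨v₀⟩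
  set e := Fintype.equivFin V with he
  set d : V → ℕ := fun v => dIn G s v₀ v with hd
  have hlt : ∀ v, (C - d v) * C + (e v : ℕ) < C * C + C := by
    intro v
    have h1 : (C - d v) * C ≤ C * C := Nat.mul_le_mul_right C (Nat.sub_le _ _)
    have h2 : (e v : ℕ) < C := (e v).isLt
    omega
  refine ⟨fun v => if v = v₀ then C * C + C else (C - d v) * C + (e v : ℕ), ?_, ?_, ?_⟩
  · intro u v huv
    simp only at huv
    by_cases hu : u = v₀ <;> by_cases hv : v = v₀
    · rw [hu, hv]
    · rw [if_pos hu, if_neg hv] at huv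
      exact absurd huv.symm (Nat.ne_of_lt (hlt v))
    · rw [if_neg hu, if_pos hv] at huv
      exact absurd huv (Nat.ne_of_lt (hlt u))
    · rw [if_neg hu, if_neg hv] at huv
      have hm : ((e u : ℕ) + (C - d u) * C) % C = ((e v : ℕ) + (C - d v) * C) % C := by
        rw [Nat.add_comm, huv, Nat.add_comm]
      rw [Nat.add_mul_mod_self_right, Nat.add_mul_mod_self_right,
        Nat.mod_eq_of_lt ((e u).isLt : (e u : ℕ) < C),
        Nat.mod_eq_of_lt ((e v).isLt : (e v : ℕ) < C)] at hm
      exact e.injective (Fin.ext hm)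
  · intro v hv
    simp only [if_neg hv, if_pos rfl]
    exact hlt v
  · intro v hvs hv
    have hWin : WIn G s v v₀ := hconn v hvs v₀ hv₀
    obtain ⟨u, hus, hadj, hstep⟩ := dIn_step hWin hv
    refine ⟨u, hus, hadj, ?_⟩
    have hdv : d v < C := dIn_lt_card hWin
    by_cases hu : u = v₀
    · simp only [if_neg hv, if_pos hu]
      exact hlt v
    · simp only [if_neg hv, if_neg hu]
      have hsub : C - d v + 1 ≤ C - d u := by
        have : d u + 1 ≤ d v := hstep
        omega
      calc (C - d v) * C + (e v : ℕ) < (C - d v) * C + C := by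
            have := (e v).isLt; omega
        _ = (C - d v + 1) * C := by ring
        _ ≤ (C - d u) * C := Nat.mul_le_mul_right C hsub
        _ ≤ (C - d u) * C + (e u : ℕ) := Nat.le_add_right _ _

noncomputable def nbrF (G : SimpleGraph V) (s : Set V) (v : V) : Finset V :=
  Finset.univ.filter (fun u => u ∈ s ∧ G.Adj v u)

theorem earlier_subset_nbrF (G : SimpleGraph V) (s : Set V) (f : V → ℕ) (v : V) :
    earlier G s f v ⊆ nbrF G s v := by
  intro u hu
  rw [earlier, Finset.mem_filter] at hu
  rw [nbrF, Finset.mem_filter]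
  exact ⟨hu.1, hu.2.1, hu.2.2.1⟩

theorem nbrF_mono (G : SimpleGraph V) {s t : Set V} (hst : s ⊆ t) (v : V) :
    nbrF G s v ⊆ nbrF G t v := by
  intro u hu
  rw [nbrF, Finset.mem_filter] at hu ⊢
  exact ⟨hu.1, hst hu.2.1, hu.2.2⟩

theorem mem_nbrF {G : SimpleGraph V} {s : Set V} {v u : V} :
    u ∈ nbrF G s v ↔ u ∈ s ∧ G.Adj v u := by
  rw [nbrF, Finset.mem_filter]
  simp

/-- non-regular / piece lemma: a connected-within-`s` graph with degrees ≤ k and one vertex of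
degree < k is k-colorable on `s`. -/
theorem piece_colorable (G : SimpleGraph V) (s : Set V) (k : ℕ) (hk : 0 < k) (v₀ : V)
    (hv₀ : v₀ ∈ s) (hconn : ConnOn G s)
    (hdeg : ∀ v ∈ s, v ≠ v₀ → (nbrF G s v).card ≤ k)
    (hv₀deg : (nbrF G s v₀).card < k) :
    ∃ c : V → Fin k, ∀ u ∈ s, ∀ v ∈ s, G.Adj u v → c u ≠ c v := by
  obtain ⟨f, hinj, hmax, hlater⟩ := exists_rank G s v₀ hv₀ hconn
  have hb : ∀ v ∈ s, gcol G s f v < k := by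
    intro v hv
    by_cases hvv : v = v₀
    · subst hvv
      calc gcol G s f v ≤ (earlier G s f v).card := gcol_le_card G s f v
        _ ≤ (nbrF G s v).card := Finset.card_le_card (earlier_subset_nbrF G s f v)
        _ < k := hv₀deg
    · obtain ⟨u, hus, hadj, hfu⟩ := hlater v hv hvv
      have hsub : earlier G s f v ⊆ (nbrF G s v).erase u := by
        intro w hw
        rw [Finset.mem_erase]
        refine ⟨?_, earlier_subset_nbrF G s f v hw⟩
        rintro rfl
        rw [earlier, Finset.mem_filter] at hw
        omega
      have hu : u ∈ nbrF G s v := mem_nbrF.mpr ⟨hus, hadj⟩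
      have hcard : ((nbrF G s v).erase u).card < (nbrF G s v).card :=
        Finset.card_erase_lt_of_mem hu
      have := hdeg v hv hvv
      calc gcol G s f v ≤ (earlier G s f v).card := gcol_le_card G s f v
        _ ≤ ((nbrF G s v).erase u).card := Finset.card_le_card hsub
        _ < k := by omega
  obtain ⟨c, hc, -⟩ := pcolorable_of_rank G s f k hk (hinj.injOn) hb
  exact ⟨c, hc⟩

/-- configuration lemma: nonadjacent a,b with common neighbor v₀ such that removing a,b keeps
the graph connected, all degrees ≤ k: then k-colorable. -/
theorem config_colorable (G : SimpleGraph V) (k : ℕ) (hk : 0 < k) (a b v₀ : V) (hab : a ≠ b)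
    (hnadj : ¬G.Adj a b) (hva : G.Adj v₀ a) (hvb : G.Adj v₀ b)
    (hconn : ConnOn G {x | x ≠ a ∧ x ≠ b})
    (hdeg : ∀ v, (nbrF G Set.univ v).card ≤ k) :
    G.Colorable k := by
  classical
  set s' : Set V := {x | x ≠ a ∧ x ≠ b} with hs'
  have hv₀a : v₀ ≠ a := fun h => hnadj (h ▸ hvb)
  have hv₀b : v₀ ≠ b := fun h => hnadj (h ▸ hva).symm
  have hv₀s : v₀ ∈ s' := ⟨hv₀a, hv₀b⟩
  obtain ⟨f', hinj', hmax', hlater'⟩ := exists_rank G s' v₀ hv₀s hconn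
  set f : V → ℕ := fun v => if v = a then 0 else if v = b then 1 else f' v + 2 with hf
  -- basic values
  have hfa : f a = 0 := by simp [hf]
  have hfb : f b = 1 := by simp [hf, hab.symm]
  have hfs : ∀ v, v ≠ a → v ≠ b → f v = f' v + 2 := by
    intro v h1 h2; simp [hf, h1, h2]
  have hf0 : ∀ u, f u = 0 → u = a := by
    intro u hu
    by_cases h1 : u = a
    · exact h1
    · by_cases h2 : u = b
      · rw [h2, hfb] at hu; omega
      · rw [hfs u h1 h2] at hu; omega
  have hinj : Function.Injective f := by
    intro u v huv
    by_cases hua : u = a <;> by_cases hva' : v = a <;>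
      by_cases hub : u = b <;> by_cases hvb' : v = b
    all_goals first
      | (subst_vars; rfl)
      | (exfalso; subst_vars;
         first
           | exact hab rfl
           | (simp only [hfa, hfb] at huv; omega)
           | (rw [hfa, hfs _ ‹_› ‹_›] at huv; omega)
           | (rw [hfb, hfs _ ‹_› ‹_›] at huv; omega)
           | (rw [hfs _ ‹_› ‹_›, hfa] at huv; omega)
           | (rw [hfs _ ‹_› ‹_›, hfb] at huv; omega))
      | (rw [hfs _ ‹_› ‹_›, hfs _ ‹_› ‹_›] at huv;
         exact hinj' (by omega))
  -- gcol values of a and b are 0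
  have hga : gcol G Set.univ f a = 0 := by
    have h0 : (0:ℕ) ∈ {n | ∀ u, u ∈ Set.univ → G.Adj a u → f u < f a → gcol G Set.univ f u ≠ n} := by
      intro u _ _ hu
      rw [hfa] at hu; omega
    have := Nat.sInf_le h0
    rw [← gcol_def] at this
    omega
  have hgb : gcol G Set.univ f b = 0 := by
    have h0 : (0:ℕ) ∈ {n | ∀ u, u ∈ Set.univ → G.Adj b u → f u < f b → gcol G Set.univ f u ≠ n} := by
      intro u _ hadj hu
      rw [hfb] at hu
      have : f u = 0 := by omega
      have := hf0 u this
      subst this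
      exact absurd hadj.symm hnadj
    have := Nat.sInf_le h0
    rw [← gcol_def] at this
    omega
  have hb : ∀ v ∈ (Set.univ : Set V), gcol G Set.univ f v < k := by
    intro v _
    by_cases hva' : v = a
    · rw [hva', hga]; exact hk
    · by_cases hvb' : v = b
      · rw [hvb', hgb]; exact hk
      · by_cases hvv : v = v₀
        · subst hvv
          -- all neighbors are earlier
          set T : Finset V := nbrF G Set.univ v with hT
          have hbT : b ∈ T := mem_nbrF.mpr ⟨Set.mem_univ b, hvb⟩
          have haT : a ∈ T.erase b := Finset.mem_erase.mpr ⟨hab, mem_nbrF.mpr ⟨Set.mem_univ a, hva⟩⟩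
          have himg : (earlier G Set.univ f v).image (gcol G Set.univ f)
              ⊆ (T.erase b).image (gcol G Set.univ f) := by
            intro x hx
            rw [Finset.mem_image] at hx
            obtain ⟨u, hu, rfl⟩ := hx
            have huT : u ∈ T := earlier_subset_nbrF G Set.univ f v hu
            by_cases hub : u = b
            · subst hub
              rw [hgb, ← hga]
              exact Finset.mem_image_of_mem _ haT
            · exact Finset.mem_image_of_mem _ (Finset.mem_erase.mpr ⟨hub, huT⟩)
          have hcard : (T.erase b).card < T.card := Finset.card_erase_lt_of_mem hbT
          have hdegv := hdeg v
          calc gcol G Set.univ f v ≤ ((earlier G Set.univ f v).image (gcol G Set.univ f)).card :=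
                gcol_le_card_image G Set.univ f v
            _ ≤ ((T.erase b).image (gcol G Set.univ f)).card := Finset.card_le_card himg
            _ ≤ (T.erase b).card := Finset.card_image_le
            _ < k := by rw [hT] at hcard ⊢; omega
        · -- v has a later neighbor
          obtain ⟨u, hus, hadj, hfu⟩ := hlater' v ⟨hva', hvb'⟩ hvv
          have hfvu : f v < f u := by
            rw [hfs v hva' hvb', hfs u hus.1 hus.2]
            omega
          have hsub : earlier G Set.univ f v ⊆ (nbrF G Set.univ v).erase u := by
            intro w hw
            rw [Finset.mem_erase]
            refine ⟨?_, earlier_subset_nbrF G Set.univ f v hw⟩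
            rintro rfl
            have := mem_earlier.mp hw
            omega
          have hu : u ∈ nbrF G Set.univ v := mem_nbrF.mpr ⟨Set.mem_univ u, hadj⟩
          have hcard : ((nbrF G Set.univ v).erase u).card < (nbrF G Set.univ v).card :=
            Finset.card_erase_lt_of_mem hu
          have hdegv := hdeg v
          calc gcol G Set.univ f v ≤ (earlier G Set.univ f v).card := gcol_le_card G Set.univ f v
            _ ≤ ((nbrF G Set.univ v).erase u).card := Finset.card_le_card hsub
            _ < k := by omega
  obtain ⟨c, hc, -⟩ := pcolorable_of_rank G Set.univ f k hk (hinj.injOn) hb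
  exact ⟨SimpleGraph.Coloring.mk c (fun {x y} hxy =>
    hc x (Set.mem_univ x) y (Set.mem_univ y) hxy)⟩

theorem compIn_subset {G : SimpleGraph V} {s : Set V} {u : V} : compIn G s u ⊆ s :=
  fun _ h => h.mem_right

theorem compIn_self {G : SimpleGraph V} {s : Set V} {u : V} (hu : u ∈ s) : u ∈ compIn G s u :=
  WIn.refl hu

theorem walk_support_reachable {G : SimpleGraph V} {t : Set V} {w p : V} (wk : G.Walk w p)
    (h : ∀ x ∈ wk.support, x ∈ t) : ∀ v ∈ wk.support, WIn G t w v := by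
  intro v hv
  refine ⟨wk.takeUntil v hv, fun x hx => h x (SimpleGraph.Walk.support_takeUntil_subset wk hv hx)⟩

/-- everything outside a component `C` of `s \ {y}` reaches `y` avoiding `C` -/
theorem win_outside_comp {G : SimpleGraph V} {s : Set V} {y u : V} (hconn : ConnOn G s)
    (hy : y ∈ s) (hu : u ∈ s \ {y}) :
    ∀ w ∈ s \ compIn G (s \ {y}) u, WIn G (s \ compIn G (s \ {y}) u) w y := by
  set C := compIn G (s \ {y}) u with hC
  have hyC : y ∉ C := fun h => (compIn_subset h).2 rfl
  intro w hw
  by_cases hwy : w = y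
  · subst hwy; exact WIn.refl ⟨hy, hyC⟩
  · obtain ⟨p, hadj, hwin⟩ := first_hit (hconn w hw.1 y hy) hwy
    obtain ⟨wk, hwk⟩ := hwin
    have hsupp : ∀ x ∈ wk.support, x ∈ s \ C := by
      intro x hx
      have hxs : x ∈ s \ {y} := hwk x hx
      refine ⟨hxs.1, fun hxC => ?_⟩
      have h1 : WIn G (s \ {y}) w x := (walk_support_reachable wk hwk x hx).mono (fun z hz => hz)
      have h2 : WIn G (s \ {y}) u x := hxC
      exact hw.2 (h2.trans h1.symm)
    have h3 : WIn G (s \ C) w p := ⟨wk, hsupp⟩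
    exact h3.trans (WIn.of_adj hadj (hsupp p wk.end_mem_support) ⟨hy, hyC⟩)

/-- Lemma M: inside any component of `s \ {y}` there is a full component (of some `s \ {z}`)
all of whose vertices are non-cutvertices of `s`. -/
theorem exists_good_comp {G : SimpleGraph V} {s : Set V} (hconn : ConnOn G s) :
    ∀ (N : ℕ) (y u : V), y ∈ s → u ∈ s \ {y} → (compIn G (s \ {y}) u).ncard ≤ N →
    ∃ z ∈ s, ∃ p ∈ s \ {z}, compIn G (s \ {z}) p ⊆ compIn G (s \ {y}) u ∧
      ∀ c ∈ compIn G (s \ {z}) p, ConnOn G (s \ {c}) := by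
  intro N
  induction N with
  | zero =>
    intro y u hy hu hle
    exfalso
    have : u ∈ compIn G (s \ {y}) u := compIn_self hu
    have hne : (compIn G (s \ {y}) u).Nonempty := ⟨u, this⟩
    have := Set.ncard_pos (Set.toFinite _) |>.mpr hne
    omega
  | succ N ih =>
    intro y u hy hu hle
    by_cases hgood : ∀ c ∈ compIn G (s \ {y}) u, ConnOn G (s \ {c})
    · exact ⟨y, hy, u, hu, Set.Subset.refl _, hgood⟩
    · push_neg at hgood
      obtain ⟨a, haC, hacut⟩ := hgood
      have has : a ∈ s := (compIn_subset haC).1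
      have hay : a ≠ y := (compIn_subset haC).2
      -- find a component of s \ {a} inside C \ {a}
      rw [ConnOn] at hacut
      push_neg at hacut
      obtain ⟨p, hp, q, hq, hpq⟩ := hacut
      set C := compIn G (s \ {y}) u with hC
      set K := compIn G (s \ {a}) y with hK
      have hyK : y ∈ s \ {a} := ⟨hy, fun h => hay h.symm⟩
      have houtK : ∀ w ∈ s \ C, w ∈ K := by
        intro w hw
        have h1 := win_outside_comp hconn hy hu w hw
        have h2 : s \ C ⊆ s \ {a} := fun z hz => ⟨hz.1, fun hza => hz.2 (by rw [Set.mem_singleton_iff] at hza; rw [hza]; exact haC)⟩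
        exact (h1.mono h2).symm
      -- one of p, q is not in K
      have hpqK : p ∉ K ∨ q ∉ K := by
        by_contra hcon
        push_neg at hcon
        exact hpq (hcon.1.symm.trans hcon.2)
      have main : ∀ r, r ∈ s \ {a} → r ∉ K →
          ∃ z ∈ s, ∃ p' ∈ s \ {z}, compIn G (s \ {z}) p' ⊆ C ∧
            ∀ c ∈ compIn G (s \ {z}) p', ConnOn G (s \ {c}) := by
        intro r hr hrK
        have hsub : compIn G (s \ {a}) r ⊆ C := by
          intro v hv
          by_contra hvC
          have hvs : v ∈ s := (compIn_subset hv).1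
          have hvK : v ∈ K := houtK v ⟨hvs, hvC⟩
          exact hrK (hvK.trans (hv : WIn G (s \ {a}) r v).symm)
        have haD : a ∉ compIn G (s \ {a}) r := fun h => (compIn_subset h).2 rfl
        have hss : compIn G (s \ {a}) r ⊂ C := ⟨hsub, fun hCs => haD (hCs haC)⟩
        have hlt : (compIn G (s \ {a}) r).ncard < C.ncard :=
          Set.ncard_lt_ncard hss (Set.toFinite _)
        obtain ⟨z, hz, p', hp', hsub', hgood'⟩ := ih a r has hr (by omega)
        exact ⟨z, hz, p', hp', hsub'.trans hsub, hgood'⟩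
      rcases hpqK with hnK | hnK
      · obtain ⟨z, hz, p', hp', h1, h2⟩ := main p hp hnK
        exact ⟨z, hz, p', hp', h1, h2⟩
      · obtain ⟨z, hz, p', hp', h1, h2⟩ := main q hq hnK
        exact ⟨z, hz, p', hp', h1, h2⟩


/-- gluing across a cut vertex -/
theorem cut_glue (G : SimpleGraph V) (hc : G.Connected) (x : V) (k : ℕ) (hk : 0 < k)
    (hdisc : ¬ ConnOn G {z | z ≠ x})
    (hdeg : ∀ v, (nbrF G Set.univ v).card ≤ k) : G.Colorable k := by
  classical
  have z0 : Fin k := ⟨0, hk⟩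
  set s : Set V := {z | z ≠ x} with hs
  -- every vertex ≠ x has a neighbor of x in its component
  have hnbr : ∀ u ∈ s, ∃ p, G.Adj p x ∧ p ∈ compIn G s u := by
    intro u hu
    have hwin : WIn G Set.univ u x := ⟨(hc.preconnected u x).some, fun _ _ => Set.mem_univ _⟩
    obtain ⟨p, hadj, hwp⟩ := first_hit hwin hu
    have : Set.univ \ {x} = s := by ext z; simp [hs]
    rw [this] at hwp
    exact ⟨p, hadj, hwp⟩
  -- in any component's piece, x has a missing neighbor
  obtain ⟨u₁, hu₁, w₁, hw₁, hnw⟩ := by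
    rw [ConnOn] at hdisc; push_neg at hdisc; exact hdisc
  -- each piece (component ∪ {x}) is k-colorable with x getting 0
  have piece : ∀ u ∈ s, ∃ g : V → Fin k,
      (∀ p ∈ compIn G s u ∪ {x}, ∀ q ∈ compIn G s u ∪ {x}, G.Adj p q → g p ≠ g q) ∧ g x = ⟨0, hk⟩ := by
    intro u hu
    set C := compIn G s u with hC
    have hxC : x ∉ C := fun h => (compIn_subset h : x ∈ s) rfl
    have hxP : x ∈ C ∪ {x} := Set.mem_union_right _ rfl
    -- piece is connected
    obtain ⟨p₀, hp₀adj, hp₀C⟩ := hnbr u hu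
    have hCmem : ∀ v ∈ C, ∀ v' ∈ C, WIn G (C ∪ {x}) v v' := by
      intro v hv v' hv'
      have h1 : WIn G s v v' := (hv : WIn G s u v).symm.trans hv'
      obtain ⟨wk, hwk⟩ := h1
      refine ⟨wk, fun z hz => Set.mem_union_left _ ?_⟩
      exact ((hv : WIn G s u v).trans (walk_support_reachable wk hwk z hz) : WIn G s u z)
    have hconnP : ConnOn G (C ∪ {x}) := by
      intro v hv v' hv'
      have hx_to : ∀ r ∈ C, WIn G (C ∪ {x}) x r := by
        intro r hr
        exact (WIn.of_adj hp₀adj.symm hxP (Set.mem_union_left _ hp₀C)).trans (hCmem p₀ hp₀C r hr)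
      rcases hv with hv | hv
      · rcases hv' with hv' | hv'
        · exact hCmem v hv v' hv'
        · rw [Set.mem_singleton_iff] at hv'; subst hv'
          exact (hx_to v hv).symm
      · rw [Set.mem_singleton_iff] at hv; subst hv
        rcases hv' with hv' | hv'
        · exact hx_to v' hv'
        · rw [Set.mem_singleton_iff] at hv'; subst hv'
          exact WIn.refl hxP
    -- degrees
    have hdegP : ∀ v ∈ C ∪ {x}, v ≠ x → (nbrF G (C ∪ {x}) v).card ≤ k :=
      fun v _ _ => le_trans (Finset.card_le_card (nbrF_mono G (Set.subset_univ _) v)) (hdeg v)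
    -- x has a neighbor outside the piece
    have hxdeg : (nbrF G (C ∪ {x}) x).card < k := by
      -- pick a vertex t not in C
      have ht : ∃ t ∈ s, t ∉ C := by
        by_cases h1 : u₁ ∈ C
        · refine ⟨w₁, hw₁, fun h2 => hnw ?_⟩
          exact (h1 : WIn G s u u₁).symm.trans h2
        · exact ⟨u₁, hu₁, h1⟩
      obtain ⟨t, hts, htC⟩ := ht
      obtain ⟨pt, hptadj, hptC⟩ := hnbr t hts
      have hptP : pt ∉ C ∪ {x} := by
        rintro (h | h)
        · exact htC (((h : WIn G s u pt).trans (hptC : WIn G s t pt).symm) : WIn G s u t)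
        · exact (compIn_subset hptC : pt ∈ s) (by rwa [Set.mem_singleton_iff] at h)
      have hsub : nbrF G (C ∪ {x}) x ⊆ (nbrF G Set.univ x).erase pt := by
        intro w hw
        rw [mem_nbrF] at hw
        rw [Finset.mem_erase, mem_nbrF]
        exact ⟨fun h => hptP (h ▸ hw.1), Set.mem_univ w, hw.2⟩
      have hpt : pt ∈ nbrF G Set.univ x := mem_nbrF.mpr ⟨Set.mem_univ pt, hptadj.symm⟩
      have h1 : ((nbrF G Set.univ x).erase pt).card < (nbrF G Set.univ x).card :=
        Finset.card_erase_lt_of_mem hpt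
      have h2 := hdeg x
      have := Finset.card_le_card hsub
      omega
    obtain ⟨g, hg⟩ := piece_colorable G (C ∪ {x}) k hk x hxP hconnP hdegP hxdeg
    refine ⟨Equiv.swap (g x) ⟨0, hk⟩ ∘ g, fun p hp q hq hadj => ?_, by simp⟩
    exact fun hcon => hg p hp q hq hadj (Equiv.injective _ hcon)
  -- now glue
  set P : Set V → Prop := fun C => ∃ g : V → Fin k,
    (∀ p ∈ C ∪ {x}, ∀ q ∈ C ∪ {x}, G.Adj p q → g p ≠ g q) ∧ g x = ⟨0, hk⟩ with hP
  set col : Set V → (V → Fin k) := fun C => if h : P C then h.choose else (fun _ => (⟨0, hk⟩ : Fin k)) with hcol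
  have hcolspec : ∀ C, P C → (∀ p ∈ C ∪ {x}, ∀ q ∈ C ∪ {x}, G.Adj p q → col C p ≠ col C q)
      ∧ col C x = ⟨0, hk⟩ := by
    intro C h
    rw [hcol]; simp only [dif_pos h]
    exact h.choose_spec
  set c : V → Fin k := fun v => if v = x then (⟨0, hk⟩ : Fin k) else col (compIn G s v) v with hc'
  refine ⟨SimpleGraph.Coloring.mk c ?_⟩
  have key : ∀ p q : V, G.Adj p q → p = x → c p ≠ c q := by
    intro p q hadj hpx
    have hadj' : G.Adj x q := hpx ▸ hadj
    have hqs : q ∈ s := fun h => G.ne_of_adj hadj' ((h : q = x).symm)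
    rw [hpx]
    have hPq : P (compIn G s q) := piece q hqs
    obtain ⟨hprop, hx0⟩ := hcolspec _ hPq
    have h1 : c x = ⟨0, hk⟩ := by rw [hc']; simp
    have h2 : c q = col (compIn G s q) q := by
      rw [hc']; simp only [if_neg (hqs : q ≠ x)]
    rw [h1, h2, ← hx0]
    exact hprop x (Set.mem_union_right _ rfl) q (Set.mem_union_left _ (compIn_self hqs)) hadj'
  intro p q hadj
  by_cases hpx : p = x
  · exact key p q hadj hpx
  · by_cases hqx : q = x
    · exact fun h => key q p hadj.symm hqx h.symm
    · have hps : p ∈ s := hpx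
      have hqs : q ∈ s := hqx
      have hcomp : compIn G s q = compIn G s p :=
        compIn_eq (WIn.of_adj hadj hps hqs)
      have hPp : P (compIn G s p) := piece p hps
      obtain ⟨hprop, -⟩ := hcolspec _ hPp
      have h1 : c p = col (compIn G s p) p := by rw [hc']; simp only [if_neg hpx]
      have h2 : c q = col (compIn G s p) q := by rw [hc']; simp only [if_neg hqx, hcomp]
      rw [h1, h2]
      exact hprop p (Set.mem_union_left _ (compIn_self hps)) q
        (Set.mem_union_left _ ((WIn.of_adj hadj hps hqs : WIn G s p q))) hadj

theorem dist_two_aux {G : SimpleGraph V} : ∀ {w x : V} (wk : G.Walk w x), w ≠ x →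
    ¬G.Adj x w → ∃ v b', G.Adj x v ∧ G.Adj v b' ∧ ¬G.Adj x b' ∧ b' ≠ x := by
  intro w x wk
  induction wk with
  | nil => intro h _; exact absurd rfl h
  | @cons a c x hadj rest ih =>
    intro hax hnadj
    by_cases hcx : c = x
    · exact absurd (hcx ▸ hadj).symm hnadj
    · by_cases hxc : G.Adj x c
      · exact ⟨c, a, hxc, hadj.symm, hnadj, hax⟩
      · exact ih hcx hxc

theorem nbrF_univ_card (G : SimpleGraph V) (v : V) :
    (nbrF G Set.univ v).card = deg G v := by
  rw [deg, Set.ncard_eq_toFinset_card']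
  congr 1
  ext u
  rw [mem_nbrF, Set.mem_toFinset, SimpleGraph.mem_neighborSet]
  simp

theorem deg_le_maxDeg (G : SimpleGraph V) (v : V) : deg G v ≤ maxDeg G := by
  apply le_csSup
  · refine ⟨Fintype.card V, ?_⟩
    rintro d ⟨u, rfl⟩
    rw [deg]
    calc (G.neighborSet u).ncard ≤ (Set.univ : Set V).ncard :=
          Set.ncard_le_ncard (Set.subset_univ _) (Set.toFinite _)
      _ = Fintype.card V := by rw [Set.ncard_univ, Nat.card_eq_fintype_card]
  · exact ⟨v, rfl⟩

theorem case2c (G : SimpleGraph V) (k : ℕ) (hk3 : 3 ≤ k)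
    (hdeg : ∀ v, (nbrF G Set.univ v).card ≤ k)
    (hreg : ∀ v, k ≤ (nbrF G Set.univ v).card)
    (hcon2 : ∀ x : V, ConnOn G {z | z ≠ x})
    (x₀ y : V) (hyx : y ≠ x₀) (hycut : ¬ ConnOn G ({z | z ≠ x₀} \ {y})) :
    G.Colorable k := by
  classical
  set s : Set V := {z | z ≠ x₀} with hs
  have hconn : ConnOn G s := hcon2 x₀
  have hy : y ∈ s := hyx
  rw [ConnOn] at hycut; push_neg at hycut
  obtain ⟨p, hp, q, hq, hpq⟩ := hycut
  set C₁ : Set V := compIn G (s \ {y}) p with hC₁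
  set C₂ : Set V := compIn G (s \ {y}) q with hC₂
  have hC₁C₂ : ∀ v, v ∈ C₁ → v ∈ C₂ → False := fun v h1 h2 => hpq (h1.trans h2.symm)
  -- find a neighbor of x₀ inside a given component of s \ {z}
  have step : ∀ z ∈ s, ∀ r ∈ s \ ({z} : Set V),
      ∃ a, G.Adj x₀ a ∧ a ∈ compIn G (s \ {z}) r := by
    intro z hz r hr
    have hrz : r ≠ z := hr.2
    have hrx : r ≠ x₀ := hr.1
    have hxz : x₀ ≠ z := fun h => hz h.symm
    have h1 : WIn G {w | w ≠ z} r x₀ := hcon2 z r hrz x₀ hxz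
    obtain ⟨a, hadj, hwin⟩ := first_hit h1 hrx
    have hset : ({w | w ≠ z} : Set V) \ {x₀} = s \ {z} := by
      ext w
      simp only [hs, Set.mem_diff, Set.mem_setOf_eq, Set.mem_singleton_iff]
      tauto
    rw [hset] at hwin
    exact ⟨a, hadj.symm, hwin⟩
  -- good components inside C₁ and C₂
  obtain ⟨z₁, hz₁, p₁, hp₁, hsub₁, hgood₁⟩ :=
    exists_good_comp hconn (compIn G (s \ {y}) p).ncard y p hy hp le_rfl
  obtain ⟨z₂, hz₂, p₂, hp₂, hsub₂, hgood₂⟩ :=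
    exists_good_comp hconn (compIn G (s \ {y}) q).ncard y q hy hq le_rfl
  obtain ⟨a, hax, haD⟩ := step z₁ hz₁ p₁ hp₁
  obtain ⟨b, hbx, hbD⟩ := step z₂ hz₂ p₂ hp₂
  have hgoodA : ConnOn G (s \ {a}) := hgood₁ a haD
  have hgoodB : ConnOn G (s \ {b}) := hgood₂ b hbD
  have haC₁ : a ∈ C₁ := hsub₁ haD
  have hbC₂ : b ∈ C₂ := hsub₂ hbD
  have hasy : a ∈ s \ {y} := compIn_subset haC₁
  have hbsy : b ∈ s \ {y} := compIn_subset hbC₂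
  have hab : a ≠ b := fun h => hC₁C₂ a haC₁ (h ▸ hbC₂)
  have hnadj : ¬ G.Adj a b := fun h =>
    hC₁C₂ b (haC₁.trans (WIn.of_adj h hasy hbsy)) hbC₂
  have hya : y ≠ a := fun h => hasy.2 h.symm
  have hyb : y ≠ b := fun h => hbsy.2 h.symm
  set t : Set V := (s \ {a}) \ {b} with ht
  have hyt : y ∈ t := ⟨⟨hy, hya⟩, hyb⟩
  -- everything in t reaches y within t
  have key : ∀ u' ∈ t, WIn G t u' y := by
    intro u' hu'
    obtain ⟨⟨hu's, hu'a⟩, hu'b⟩ := hu'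
    by_cases hu'y : u' = y
    · subst hu'y; exact WIn.refl hyt
    · by_cases hC1 : u' ∈ C₁
      · have hwy : WIn G (s \ {a}) u' y := hgoodA u' ⟨hu's, hu'a⟩ y ⟨hy, hya⟩
        obtain ⟨p', hadjp, hwin⟩ := first_hit hwy hu'y
        obtain ⟨wk, hwk⟩ := hwin
        have hsupp : ∀ v ∈ wk.support, v ∈ t := by
          intro v hv
          have h2 : WIn G ((s \ {a}) \ {y}) u' v := walk_support_reachable wk hwk v hv
          have h3 : WIn G (s \ {y}) u' v := h2.mono (fun z hz => ⟨hz.1.1, hz.2⟩)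
          have hvC₁ : v ∈ C₁ := by
            rw [hC₁, ← compIn_eq (hC1 : WIn G (s \ {y}) p u')]
            exact h3
          have hvb : v ≠ b := fun h => hC₁C₂ b (h ▸ hvC₁) hbC₂
          exact ⟨⟨(hwk v hv).1.1, (hwk v hv).1.2⟩, hvb⟩
        have h4 : WIn G t u' p' := ⟨wk, hsupp⟩
        exact h4.trans (WIn.of_adj hadjp (hsupp p' wk.end_mem_support) hyt)
      · by_cases hC2 : u' ∈ C₂
        · have hwy : WIn G (s \ {b}) u' y := hgoodB u' ⟨hu's, hu'b⟩ y ⟨hy, hyb⟩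
          obtain ⟨p', hadjp, hwin⟩ := first_hit hwy hu'y
          obtain ⟨wk, hwk⟩ := hwin
          have hsupp : ∀ v ∈ wk.support, v ∈ t := by
            intro v hv
            have h2 : WIn G ((s \ {b}) \ {y}) u' v := walk_support_reachable wk hwk v hv
            have h3 : WIn G (s \ {y}) u' v := h2.mono (fun z hz => ⟨hz.1.1, hz.2⟩)
            have hvC₂ : v ∈ C₂ := by
              rw [hC₂, ← compIn_eq (hC2 : WIn G (s \ {y}) q u')]
              exact h3
            have hva : v ≠ a := fun h => hC₁C₂ a haC₁ (h ▸ hvC₂)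
            exact ⟨⟨(hwk v hv).1.1, hva⟩, (hwk v hv).1.2⟩
          have h4 : WIn G t u' p' := ⟨wk, hsupp⟩
          exact h4.trans (WIn.of_adj hadjp (hsupp p' wk.end_mem_support) hyt)
        · -- u' in neither C₁ nor C₂
          have hwy : WIn G s u' y := hconn u' hu's y hy
          obtain ⟨p', hadjp, hwin⟩ := first_hit hwy hu'y
          obtain ⟨wk, hwk⟩ := hwin
          have hsupp : ∀ v ∈ wk.support, v ∈ t := by
            intro v hv
            have h3 : WIn G (s \ {y}) u' v := walk_support_reachable wk hwk v hv
            have hva : v ≠ a := by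
              rintro rfl
              exact hC1 ((haC₁ : WIn G (s \ {y}) p v).trans h3.symm)
            have hvb : v ≠ b := by
              rintro rfl
              exact hC2 ((hbC₂ : WIn G (s \ {y}) q v).trans h3.symm)
            exact ⟨⟨(hwk v hv).1, hva⟩, hvb⟩
          have h4 : WIn G t u' p' := ⟨wk, hsupp⟩
          exact h4.trans (WIn.of_adj hadjp (hsupp p' wk.end_mem_support) hyt)
  -- connectivity of the complement of {a, b}
  have hax' : a ≠ x₀ := hasy.1
  have hbx' : b ≠ x₀ := hbsy.1
  have hbig : ConnOn G {w | w ≠ a ∧ w ≠ b} := by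
    have hsubT : t ⊆ {w | w ≠ a ∧ w ≠ b} := fun w hw => ⟨hw.1.2, hw.2⟩
    have hreach : ∀ u ∈ ({w | w ≠ a ∧ w ≠ b} : Set V), WIn G {w | w ≠ a ∧ w ≠ b} u y := by
      intro u hu
      by_cases hux : u = x₀
      · subst hux
        -- u = x₀ : pick a neighbor r ∉ {a, b}
        have hcard : 0 < ((nbrF G Set.univ u) \ {a, b}).card := by
          have h1 := hreg u
          have h2 : ((nbrF G Set.univ u) \ {a, b}).card
              ≥ (nbrF G Set.univ u).card - ({a, b} : Finset V).card :=
            Finset.le_card_sdiff _ _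
          have h3 : ({a, b} : Finset V).card ≤ 2 := Finset.card_insert_le _ _ |>.trans (by simp)
          omega
        obtain ⟨r, hr⟩ := Finset.card_pos.mp hcard
        rw [Finset.mem_sdiff, mem_nbrF] at hr
        obtain ⟨⟨-, hadjr⟩, hrab⟩ := hr
        rw [Finset.mem_insert, Finset.mem_singleton] at hrab
        push_neg at hrab
        have hrx : r ≠ u := fun h => G.ne_of_adj hadjr h.symm
        have hrt : r ∈ t := ⟨⟨hrx, hrab.1⟩, hrab.2⟩
        have h5 : WIn G {w | w ≠ a ∧ w ≠ b} r y := (key r hrt).mono hsubT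
        exact (WIn.of_adj hadjr hu (hsubT hrt)).trans h5
      · have hut : u ∈ t := ⟨⟨hux, hu.1⟩, hu.2⟩
        exact (key u hut).mono hsubT
    intro u hu v hv
    exact (hreach u hu).trans (hreach v hv).symm
  exact config_colorable G k (by omega) a b x₀ hab hnadj hax hbx hbig hdeg

end BrooksAux

theorem stmt17 {V : Type*} [Fintype V] (G : SimpleGraph V) (hc : G.Connected)
    (h : chromNum G = maxDeg G + 1) (hD : 3 ≤ maxDeg G) :
    Nonempty (G ≃g completeGraph (Fin (maxDeg G + 1))) := by
  classical
  have hnV : Nonempty V := hc.nonempty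
  by_cases hcomp : ∀ u v : V, u ≠ v → G.Adj u v
  · -- complete graph case
    have hdegv : ∀ v : V, deg G v = Fintype.card V - 1 := by
      intro v
      rw [deg]
      have hset : G.neighborSet v = Set.univ \ {v} := by
        ext u
        simp only [SimpleGraph.mem_neighborSet, Set.mem_diff, Set.mem_univ, true_and,
          Set.mem_singleton_iff]
        constructor
        · intro hadj h1; exact G.ne_of_adj hadj.symm h1
        · intro h1; exact (hcomp v u (fun h2 => h1 h2.symm))
      rw [hset, Set.ncard_diff (Set.subset_univ _), Set.ncard_univ, Set.ncard_singleton,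
        Nat.card_eq_fintype_card]
    have hmax : maxDeg G = Fintype.card V - 1 := by
      rw [maxDeg]
      have : {d | ∃ v, d = deg G v} = {Fintype.card V - 1} := by
        ext d
        simp only [Set.mem_setOf_eq, Set.mem_singleton_iff]
        constructor
        · rintro ⟨v, rfl⟩; exact hdegv v
        · rintro rfl; exact ⟨Classical.arbitrary V, (hdegv _).symm⟩
      rw [this, csSup_singleton]
    have hcard : Fintype.card V = maxDeg G + 1 := by
      have h1 : 0 < Fintype.card V := Fintype.card_pos
      omega
    have e := Fintype.equivFinOfCardEq hcard
    refine ⟨⟨e, ?_⟩⟩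
    intro u v
    simp only [completeGraph, SimpleGraph.top_adj, ne_eq, EmbeddingLike.apply_eq_iff_eq]
    constructor
    · intro h1; exact hcomp u v h1
    · intro h1 h2; exact G.ne_of_adj h1 h2
  · exfalso
    push_neg at hcomp
    obtain ⟨u₀, w₀, huw, hnuw⟩ := hcomp
    set k := maxDeg G with hkdef
    have hcontra : ¬ G.Colorable k := by
      intro hcol
      have h1 : chromNum G ≤ k := Nat.sInf_le hcol
      omega
    apply hcontra
    have hdegk : ∀ v, (nbrF G Set.univ v).card ≤ k := by
      intro v; rw [nbrF_univ_card]; exact deg_le_maxDeg G v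
    have hk0 : 0 < k := by omega
    have hconn_univ : ConnOn G Set.univ := fun u _ v _ =>
      ⟨(hc.preconnected u v).some, fun _ _ => Set.mem_univ _⟩
    by_cases hsmall : ∃ v, (nbrF G Set.univ v).card < k
    · obtain ⟨v₀, hv₀⟩ := hsmall
      obtain ⟨c, hcprop⟩ := piece_colorable G Set.univ k hk0 v₀ (Set.mem_univ v₀) hconn_univ
        (fun v _ _ => hdegk v) hv₀
      exact ⟨SimpleGraph.Coloring.mk c (fun {x y} hxy =>
        hcprop x (Set.mem_univ x) y (Set.mem_univ y) hxy)⟩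
    · push_neg at hsmall
      by_cases hdom : ∃ x, ∀ w, w ≠ x → G.Adj x w
      · obtain ⟨x, hx⟩ := hdom
        have hxu : x ≠ u₀ := fun h1 => hnuw (h1 ▸ hx w₀ (fun h2 => huw (h1 ▸ h2).symm))
        have hxw : x ≠ w₀ := fun h1 => hnuw ((h1 ▸ hx u₀ (fun h2 => huw (h1 ▸ h2))).symm)
        have hbig : ConnOn G {z | z ≠ u₀ ∧ z ≠ w₀} := by
          have hxmem : x ∈ ({z | z ≠ u₀ ∧ z ≠ w₀} : Set V) := ⟨hxu, hxw⟩
          have hreach : ∀ u ∈ ({z | z ≠ u₀ ∧ z ≠ w₀} : Set V),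
              WIn G {z | z ≠ u₀ ∧ z ≠ w₀} u x := by
            intro u hu
            by_cases hux : u = x
            · subst hux; exact WIn.refl hxmem
            · exact WIn.of_adj (hx u hux).symm hu hxmem
          intro u hu v hv
          exact (hreach u hu).trans (hreach v hv).symm
        exact config_colorable G k hk0 u₀ w₀ x huw hnuw (hx u₀ (fun h2 => hxu h2.symm))
          (hx w₀ (fun h2 => hxw h2.symm)) hbig hdegk
      · by_cases hcut : ∃ x, ¬ ConnOn G {z | z ≠ x}
        · obtain ⟨x, hx⟩ := hcut
          exact cut_glue G hc x k hk0 hx hdegk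
        · push_neg at hcut
          by_cases h2c : ∃ x₀ y, y ≠ x₀ ∧ ¬ ConnOn G ({z | z ≠ x₀} \ {y})
          · obtain ⟨x₀, y, hyx, hycut⟩ := h2c
            exact case2c G k hD hdegk hsmall hcut x₀ y hyx hycut
          · push_neg at h2c
            push_neg at hdom
            set x₀ := Classical.arbitrary V with hx₀
            obtain ⟨w, hwx, hnadjw⟩ := hdom x₀
            obtain ⟨v, b', hxv, hvb, hnxb, hbx⟩ :=
              dist_two_aux ((hc.preconnected w x₀).some) hwx hnadjw
            have hab : x₀ ≠ b' := hbx.symm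
            have hconn' : ConnOn G {z | z ≠ x₀ ∧ z ≠ b'} := by
              have hset : ({z | z ≠ x₀} : Set V) \ {b'} = {z | z ≠ x₀ ∧ z ≠ b'} := by
                ext z
                simp only [Set.mem_diff, Set.mem_setOf_eq, Set.mem_singleton_iff]
              rw [← hset]
              exact h2c x₀ b' hbx
            exact config_colorable G k hk0 x₀ b' v hab hnxb hxv.symm hvb hconn' hdegk
end

section
/- If G is a finite simple graph with at least one edge such that χ(G) > Δ₂(G) and G is vertex-critical, then the set of vertices of degree at least χ(G) in G forms an independent set, and every vertex of degree at least χ(G) has all its neighbors of degree exactly χ(G) − 1. -/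
open SimpleGraph Classical

lemma colorable_chromNum {V : Type*} [Fintype V] (G : SimpleGraph V) :
    G.Colorable (chromNum G) :=
  Nat.sInf_mem (s := {n | G.Colorable n}) ⟨Fintype.card V, G.colorable_of_fintype⟩

lemma low_deg {V : Type*} [Fintype V] (G : SimpleGraph V)
    (hpos : 1 ≤ chromNum G) (hcrit : critical G) (v : V) :
    chromNum G - 1 ≤ deg G v := by
  by_contra hlt
  push_neg at hlt
  set k := chromNum G with hk
  set m := k - 1 with hm
  -- the induced graph on V \ {v} is colorable with m colors
  have hc : (G.induce {u | u ≠ v}).Colorable m :=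
    (colorable_chromNum _).mono (by have := hcrit v; omega)
  obtain ⟨C⟩ := hc
  -- colors used by neighbors of v
  set f : G.neighborSet v → Fin m := fun u => C ⟨u.1, Adj.ne' u.2⟩ with hf
  have hrange : Set.range f ≠ Set.univ := by
    intro heq
    have h1 : (Set.range f).ncard ≤ deg G v := by
      rw [← Set.image_univ]
      refine le_trans (Set.ncard_image_le (Set.toFinite _)) ?_
      rw [Set.ncard_univ, Nat.card_coe_set_eq]
      rfl
    rw [heq, Set.ncard_univ, Nat.card_eq_fintype_card, Fintype.card_fin] at h1
    omega
  obtain ⟨c, hc⟩ := Set.ne_univ_iff_exists_notMem _ |>.mp hrange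
  -- extend to a coloring of G
  set g : V → Fin m := fun u => if h : u = v then c else C ⟨u, h⟩ with hg
  have hvalid : ∀ {a b : V}, G.Adj a b → g a ≠ g b := by
    intro a b hab
    by_cases ha : a = v <;> by_cases hb : b = v
    · exact absurd (ha ▸ hb ▸ hab) (G.irrefl)
    · simp only [hg, ha, dif_pos, dif_neg hb]
      intro heq
      exact hc ⟨⟨b, ha ▸ hab⟩, heq.symm⟩
    · simp only [hg, hb, dif_pos, dif_neg ha]
      intro heq
      exact hc ⟨⟨a, hb ▸ hab.symm⟩, heq⟩
    · simp only [hg, dif_neg ha, dif_neg hb]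
      exact C.valid (by simp [hab])
  have : G.Colorable m := ⟨SimpleGraph.Coloring.mk g fun hab => hvalid hab⟩
  have hle : k ≤ m := Nat.sInf_le this
  omega

theorem stmt19 {V : Type*} [Fintype V] (G : SimpleGraph V)
    (he : ∃ u v, G.Adj u v) (hcrit : critical G) (h : delta2 G < chromNum G) :
    (∀ u v, chromNum G ≤ deg G u → chromNum G ≤ deg G v → ¬ G.Adj u v) ∧
    (∀ u v, chromNum G ≤ deg G u → G.Adj u v → deg G v = chromNum G - 1) := by
  have hpos : 1 ≤ chromNum G := by
    by_contra hp
    push_neg at hp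
    interval_cases hk : chromNum G
    have h0 : G.Colorable 0 := hk ▸ colorable_chromNum G
    obtain ⟨C⟩ := h0
    obtain ⟨u, v, huv⟩ := he
    exact (C u).elim0
  constructor
  · intro u v hu hv hadj
    have := min_le_delta2 G hadj
    omega
  · intro u v hu hadj
    have h1 := min_le_delta2 G hadj
    have h2 := low_deg G hpos hcrit v
    omega
end
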